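/- arXiv:2010.02541 — 3 statements merged into one kernel-verified Lean document; each statement's English description precedes it below -/
import Mathlib

section
/- Let $n\ge 1$, $l\ge 1$, and $r\ge 2l$ with $r^2\le l^3 n$. Let $\mathcal{B}$ be an $n$-uniform intersecting family of size $r$ such that the intersection of any $l$ distinct members of $\mathcal{B}$ is empty. Then $c_n(\mathcal{B})\le e^{-r^2/(10\,l^3 n)}$, where $c_n(\mathcal{B})=\sum_{C\in\mathcal{C}(\mathcal{B})}n^{-|C|}$ and $\mathcal{C}(\mathcal{B})$ is the family of minimal covers of $\mathcal{B}$ of size at most $n$. -/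
open Finset
set_option linter.unusedSectionVars false

variable {α : Type*}

/-- `C` is a cover of the family `𝓕`: it intersects every member. -/
def IsCover [DecidableEq α] (C : Finset α) (𝓕 : Finset (Finset α)) : Prop :=
  ∀ A ∈ 𝓕, (C ∩ A).Nonempty

/-- The family of all minimal covers of `𝓕` of size at most `n`. -/
noncomputable def minCovers [Fintype α] [DecidableEq α] (n : ℕ)
    (𝓕 : Finset (Finset α)) : Finset (Finset α) := by
  classical
  exact univ.filter (fun C => C.card ≤ n ∧ IsCover C 𝓕 ∧
    ∀ C' ⊆ C, IsCover C' 𝓕 → C' = C)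

/-- `c_λ(𝓕) = ∑_{C ∈ 𝓒(𝓕)} λ^{-|C|}`. -/
noncomputable def covWeight [Fintype α] [DecidableEq α] (n : ℕ) (lam : ℝ)
    (𝓕 : Finset (Finset α)) : ℝ :=
  ∑ C ∈ minCovers n 𝓕, lam ^ (-(C.card : ℤ))

/-- The covering number `τ(𝓕)`: minimum size of a cover. -/
noncomputable def covNum [DecidableEq α] (𝓕 : Finset (Finset α)) : ℕ :=
  sInf {k | ∃ C : Finset α, C.card = k ∧ IsCover C 𝓕}

section AuxDefs

variable [Fintype α] [DecidableEq α]

/-- All (inclusion-)minimal covers of `𝓖`, of any size. -/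
noncomputable def MCov (𝓖 : Finset (Finset α)) : Finset (Finset α) := by
  classical
  exact univ.filter (fun C => IsCover C 𝓖 ∧ ∀ C' ⊆ C, IsCover C' 𝓖 → C' = C)

lemma mem_MCov {𝓖 : Finset (Finset α)} {C : Finset α} :
    C ∈ MCov 𝓖 ↔ IsCover C 𝓖 ∧ ∀ C' ⊆ C, IsCover C' 𝓖 → C' = C := by
  simp [MCov]

lemma MCov_empty : MCov (∅ : Finset (Finset α)) = {∅} := by
  ext C
  simp only [mem_MCov, mem_singleton]
  constructor
  · rintro ⟨_, hmin⟩
    exact (hmin ∅ (empty_subset _) (fun A hA => absurd hA (notMem_empty _))).symm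
  · rintro rfl
    exact ⟨fun A hA => absurd hA (notMem_empty _), fun C' hC' _ => subset_empty.mp hC'⟩

/-- weight of a cover: 1/2 if it hits the forbidden-history set `U`, else 1 -/
noncomputable def wgt (U C : Finset α) : ℝ := if (C ∩ U).Nonempty then 2⁻¹ else 1

lemma wgt_le_one (U C : Finset α) : wgt U C ≤ 1 := by
  unfold wgt; split <;> norm_num

lemma half_le_wgt (U C : Finset α) : (2⁻¹ : ℝ) ≤ wgt U C := by
  unfold wgt; split <;> norm_num

lemma wgt_nonneg (U C : Finset α) : (0:ℝ) ≤ wgt U C :=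
  le_trans (by norm_num) (half_le_wgt U C)

noncomputable def Zfun (n : ℕ) (𝓖 : Finset (Finset α)) : ℝ :=
  ∑ C ∈ MCov 𝓖, (n:ℝ) ^ (-(C.card : ℤ))

noncomputable def Zw (n : ℕ) (U : Finset α) (𝓖 : Finset (Finset α)) : ℝ :=
  ∑ C ∈ MCov 𝓖, (n:ℝ) ^ (-(C.card : ℤ)) * wgt U C

lemma Zfun_empty (n : ℕ) : Zfun n (∅ : Finset (Finset α)) = 1 := by
  simp [Zfun, MCov_empty]

lemma Zw_empty_fam (n : ℕ) (U : Finset α) : Zw n U (∅ : Finset (Finset α)) = 1 := by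
  simp [Zw, MCov_empty, wgt]

lemma Zfun_nonneg (n : ℕ) (𝓖 : Finset (Finset α)) : 0 ≤ Zfun n 𝓖 := by
  apply sum_nonneg; intro C _
  exact zpow_nonneg (by positivity) _

/-- removing the chosen element from a minimal cover gives a minimal cover
of the family of uncovered sets -/
lemma erase_mem_MCov {𝓖 : Finset (Finset α)} {C : Finset α} {x : α}
    (hC : C ∈ MCov 𝓖) (hx : x ∈ C) :
    C.erase x ∈ MCov (𝓖.filter (fun A => x ∉ A)) := by
  obtain ⟨hcov, hmin⟩ := mem_MCov.mp hC
  rw [mem_MCov]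
  constructor
  · intro A hA
    obtain ⟨hA𝓖, hxA⟩ := mem_filter.mp hA
    obtain ⟨y, hy⟩ := hcov A hA𝓖
    obtain ⟨hyC, hyA⟩ := mem_inter.mp hy
    exact ⟨y, mem_inter.mpr ⟨mem_erase.mpr ⟨fun h => hxA (h ▸ hyA), hyC⟩, hyA⟩⟩
  · intro D hD hDcov
    have hDC : insert x D ⊆ C := insert_subset hx (hD.trans (erase_subset _ _))
    have hcov' : IsCover (insert x D) 𝓖 := by
      intro A hA𝓖
      by_cases hxA : x ∈ A
      · exact ⟨x, mem_inter.mpr ⟨mem_insert_self _ _, hxA⟩⟩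
      · obtain ⟨y, hy⟩ := hDcov A (mem_filter.mpr ⟨hA𝓖, hxA⟩)
        obtain ⟨h1, h2⟩ := mem_inter.mp hy
        exact ⟨y, mem_inter.mpr ⟨mem_insert_of_mem h1, h2⟩⟩
    have hxD : x ∉ D := fun h => (mem_erase.mp (hD h)).1 rfl
    rw [← hmin (insert x D) hDC hcov', erase_insert hxD]



lemma swap_sum (S : Finset (Finset α)) (B : Finset α) (g : α → Finset α → ℝ) :
    ∑ C ∈ S, ∑ x ∈ C ∩ B, g x C
      = ∑ x ∈ B, ∑ C ∈ S.filter (fun C => x ∈ C), g x C := by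
  have h1 : ∀ C ∈ S, ∑ x ∈ C ∩ B, g x C = ∑ x ∈ B, if x ∈ C then g x C else 0 := by
    intro C _
    rw [inter_comm, ← filter_mem_eq_inter, sum_filter]
  rw [Finset.sum_congr rfl h1, Finset.sum_comm]
  exact Finset.sum_congr rfl (fun x _ => (sum_filter _ _).symm)

/-- key step: summing over minimal covers containing `x`, with any nonnegative
weight depending on `C.erase x`, is at most `n⁻¹` times the corresponding sum
over minimal covers of the residual family. -/
lemma sum_erase_le (n : ℕ) (hn : 1 ≤ n) (𝓖 : Finset (Finset α)) (x : α)
    (g : Finset α → ℝ) (hg : ∀ D, 0 ≤ g D) :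
    ∑ C ∈ (MCov 𝓖).filter (fun C => x ∈ C), (n:ℝ) ^ (-(C.card : ℤ)) * g (C.erase x)
      ≤ (n:ℝ)⁻¹ * ∑ D ∈ MCov (𝓖.filter (fun A => x ∉ A)), (n:ℝ) ^ (-(D.card : ℤ)) * g D := by
  have hn0 : (0:ℝ) < n := by exact_mod_cast hn
  have step1 : ∀ C ∈ (MCov 𝓖).filter (fun C => x ∈ C),
      (n:ℝ) ^ (-(C.card:ℤ)) * g (C.erase x)
        = (n:ℝ)⁻¹ * ((n:ℝ) ^ (-((C.erase x).card:ℤ)) * g (C.erase x)) := by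
    intro C hC
    have hxC : x ∈ C := (mem_filter.mp hC).2
    have h1 : 1 ≤ C.card := card_pos.mpr ⟨x, hxC⟩
    have hce : (C.erase x).card = C.card - 1 := card_erase_of_mem hxC
    have hz : (-(C.card:ℤ)) = (-1) + (-(((C.erase x).card : ℕ) : ℤ)) := by
      rw [hce]
      push_cast [Nat.cast_sub h1]
      ring
    rw [hz, zpow_add₀ (ne_of_gt hn0), zpow_neg_one, mul_assoc]
  rw [Finset.sum_congr rfl step1, ← Finset.mul_sum]
  apply mul_le_mul_of_nonneg_left _ (by positivity)
  have hinj : ∀ C₁ ∈ (MCov 𝓖).filter (fun C => x ∈ C),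
      ∀ C₂ ∈ (MCov 𝓖).filter (fun C => x ∈ C), C₁.erase x = C₂.erase x → C₁ = C₂ := by
    intro C₁ h₁ C₂ h₂ he
    have hx₁ : x ∈ C₁ := (mem_filter.mp h₁).2
    have hx₂ : x ∈ C₂ := (mem_filter.mp h₂).2
    rw [← insert_erase hx₁, ← insert_erase hx₂, he]
  calc ∑ C ∈ (MCov 𝓖).filter (fun C => x ∈ C),
        (n:ℝ) ^ (-((C.erase x).card:ℤ)) * g (C.erase x)
      = ∑ D ∈ ((MCov 𝓖).filter (fun C => x ∈ C)).image (fun C => C.erase x),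
          (n:ℝ) ^ (-(D.card:ℤ)) * g D :=
        (Finset.sum_image (f := fun D => (n:ℝ) ^ (-(D.card:ℤ)) * g D) hinj).symm
    _ ≤ ∑ D ∈ MCov (𝓖.filter (fun A => x ∉ A)), (n:ℝ) ^ (-(D.card:ℤ)) * g D := by
        apply Finset.sum_le_sum_of_subset_of_nonneg
        · intro D hD
          obtain ⟨C, hC, rfl⟩ := mem_image.mp hD
          obtain ⟨hCM, hxC⟩ := mem_filter.mp hC
          exact erase_mem_MCov hCM hxC
        · intro D _ _
          exact mul_nonneg (zpow_nonneg (le_of_lt hn0) _) (hg D)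

/-- Claim I: the total weight of minimal covers of an `n`-uniform family is at most 1. -/
lemma claimI (n : ℕ) (hn : 1 ≤ n) (𝓑 : Finset (Finset α))
    (hunif : ∀ B ∈ 𝓑, B.card = n) :
    ∀ (s : ℕ) (𝓖 : Finset (Finset α)), 𝓖.card ≤ s → 𝓖 ⊆ 𝓑 → Zfun n 𝓖 ≤ 1 := by
  have hn0 : (0:ℝ) < n := by exact_mod_cast hn
  intro s
  induction s with
  | zero =>
    intro 𝓖 hc _
    rw [card_eq_zero.mp (Nat.le_zero.mp hc), Zfun_empty]
  | succ s ih =>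
    intro 𝓖 hc hsub
    rcases 𝓖.eq_empty_or_nonempty with rfl | ⟨B, hB⟩
    · rw [Zfun_empty]
    have hBn : B.card = n := hunif B (hsub hB)
    calc Zfun n 𝓖 = ∑ C ∈ MCov 𝓖, (n:ℝ) ^ (-(C.card : ℤ)) := rfl
      _ ≤ ∑ C ∈ MCov 𝓖, ∑ x ∈ C ∩ B, (n:ℝ) ^ (-(C.card : ℤ)) * 1 := by
          apply sum_le_sum
          intro C hC
          have hne : (C ∩ B).Nonempty := (mem_MCov.mp hC).1 B hB
          have h1 : (1:ℝ) ≤ (C ∩ B).card := by exact_mod_cast hne.card_pos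
          rw [Finset.sum_const, nsmul_eq_mul, mul_one]
          calc (n:ℝ) ^ (-(C.card : ℤ)) = 1 * (n:ℝ) ^ (-(C.card : ℤ)) := (one_mul _).symm
            _ ≤ ((C ∩ B).card : ℝ) * (n:ℝ) ^ (-(C.card : ℤ)) :=
                mul_le_mul_of_nonneg_right h1 (zpow_nonneg (le_of_lt hn0) _)
      _ = ∑ x ∈ B, ∑ C ∈ (MCov 𝓖).filter (fun C => x ∈ C), (n:ℝ) ^ (-(C.card : ℤ)) * 1 :=
          swap_sum _ _ _
      _ ≤ ∑ x ∈ B, (n:ℝ)⁻¹ * ∑ D ∈ MCov (𝓖.filter (fun A => x ∉ A)),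
            (n:ℝ) ^ (-(D.card : ℤ)) * 1 := by
          apply sum_le_sum
          intro x _
          exact sum_erase_le n hn 𝓖 x (fun _ => 1) (fun _ => zero_le_one)
      _ ≤ ∑ x ∈ B, (n:ℝ)⁻¹ * 1 := by
          apply sum_le_sum
          intro x hx
          apply mul_le_mul_of_nonneg_left _ (by positivity)
          have hss : 𝓖.filter (fun A => x ∉ A) ⊂ 𝓖 := by
            apply Finset.ssubset_iff_of_subset (filter_subset _ _) |>.mpr
            exact ⟨B, hB, by simp [hx]⟩
          have hcard' : (𝓖.filter (fun A => x ∉ A)).card ≤ s := by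
            have := card_lt_card hss
            omega
          have := ih (𝓖.filter (fun A => x ∉ A)) hcard' ((filter_subset _ _).trans hsub)
          simpa [Zfun] using this
      _ = (B.card : ℝ) * (n:ℝ)⁻¹ := by rw [Finset.sum_const, nsmul_eq_mul, mul_one]
      _ = 1 := by rw [hBn]; field_simp

/-- per-cover branching inequality -/
lemma perC {𝓖 : Finset (Finset α)} {C B : Finset α} (U : Finset α)
    (hC : C ∈ MCov 𝓖) (hB : B ∈ 𝓖) :
    wgt U C ≤ ∑ x ∈ C ∩ B, (if x ∈ U then (2⁻¹:ℝ) else wgt (B ∪ U) (C.erase x)) := by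
  have hCB : (C ∩ B).Nonempty := (mem_MCov.mp hC).1 B hB
  have hterm : ∀ x ∈ C ∩ B, (2⁻¹:ℝ) ≤ (if x ∈ U then (2⁻¹:ℝ) else wgt (B ∪ U) (C.erase x)) := by
    intro x _
    split
    · exact le_refl _
    · exact half_le_wgt _ _
  by_cases h2 : 2 ≤ (C ∩ B).card
  · calc wgt U C ≤ 1 := wgt_le_one _ _
      _ = (2:ℝ) * 2⁻¹ := by norm_num
      _ ≤ ((C ∩ B).card : ℝ) * 2⁻¹ := by
          apply mul_le_mul_of_nonneg_right _ (by norm_num)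
          exact_mod_cast h2
      _ ≤ ∑ x ∈ C ∩ B, (if x ∈ U then (2⁻¹:ℝ) else wgt (B ∪ U) (C.erase x)) := by
          have := Finset.card_nsmul_le_sum (C ∩ B) _ _ hterm
          simpa [nsmul_eq_mul] using this
  · have h1 : (C ∩ B).card = 1 := by
      have := hCB.card_pos
      omega
    obtain ⟨x₀, hx0⟩ := card_eq_one.mp h1
    have hx₀m : x₀ ∈ C ∩ B := by rw [hx0]; exact mem_singleton_self _
    obtain ⟨hx₀C, hx₀B⟩ := mem_inter.mp hx₀m
    rw [hx0, sum_singleton]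
    by_cases hxU : x₀ ∈ U
    · rw [if_pos hxU]
      have hne : (C ∩ U).Nonempty := ⟨x₀, mem_inter.mpr ⟨hx₀C, hxU⟩⟩
      unfold wgt
      rw [if_pos hne]
    · rw [if_neg hxU]
      by_cases hCU : (C ∩ U).Nonempty
      · calc wgt U C = 2⁻¹ := by unfold wgt; rw [if_pos hCU]
          _ ≤ wgt (B ∪ U) (C.erase x₀) := half_le_wgt _ _
      · have hw1 : wgt U C = 1 := by unfold wgt; rw [if_neg hCU]
        have hnone : ¬ ((C.erase x₀) ∩ (B ∪ U)).Nonempty := by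
          rintro ⟨y, hy⟩
          obtain ⟨hyE, hyBU⟩ := mem_inter.mp hy
          obtain ⟨hyne, hyC⟩ := mem_erase.mp hyE
          rcases mem_union.mp hyBU with hyB | hyU
          · have : y ∈ C ∩ B := mem_inter.mpr ⟨hyC, hyB⟩
            rw [hx0] at this
            exact hyne (mem_singleton.mp this)
          · exact hCU ⟨y, mem_inter.mpr ⟨hyC, hyU⟩⟩
        have hw2 : wgt (B ∪ U) (C.erase x₀) = 1 := by unfold wgt; rw [if_neg hnone]
        rw [hw1, hw2]

/-- one factor of the product bound -/
noncomputable def ffac (a : ℝ) (j : ℕ) : ℝ := max 0 (1 - (j:ℝ)/a)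

noncomputable def bprod (a : ℝ) (m t : ℕ) : ℝ := ∏ i ∈ Finset.range m, ffac a (t + i)

lemma ffac_nonneg (a : ℝ) (j : ℕ) : 0 ≤ ffac a j := le_max_left _ _

lemma ffac_le_one (a : ℝ) (ha : 0 ≤ a) (j : ℕ) : ffac a j ≤ 1 := by
  apply max_le (by norm_num)
  have : (0:ℝ) ≤ (j:ℝ)/a := by positivity
  linarith

lemma bprod_nonneg (a : ℝ) (m t : ℕ) : 0 ≤ bprod a m t :=
  Finset.prod_nonneg (fun i _ => ffac_nonneg a _)

lemma bprod_le_one (a : ℝ) (ha : 0 ≤ a) (m t : ℕ) : bprod a m t ≤ 1 :=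
  Finset.prod_le_one (fun i _ => ffac_nonneg a _) (fun i _ => ffac_le_one a ha _)

lemma bprod_succ (a : ℝ) (m t : ℕ) : bprod a (m+1) t = ffac a t * bprod a m (t+1) := by
  unfold bprod
  rw [Finset.prod_range_succ']
  have h1 : ∀ i ∈ Finset.range m, ffac a (t + (i+1)) = ffac a ((t+1) + i) := by
    intro i _
    congr 1
    omega
  rw [Finset.prod_congr rfl h1, add_zero, mul_comm]

lemma bprod_anti (a : ℝ) (ha : 0 ≤ a) {m m' : ℕ} (t : ℕ) (h : m ≤ m') :
    bprod a m' t ≤ bprod a m t := by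
  obtain ⟨k, rfl⟩ := Nat.exists_eq_add_of_le h
  unfold bprod
  rw [Finset.prod_range_add]
  calc (∏ i ∈ Finset.range m, ffac a (t + i)) * ∏ i ∈ Finset.range k, ffac a (t + (m + i))
      ≤ (∏ i ∈ Finset.range m, ffac a (t + i)) * 1 := by
        apply mul_le_mul_of_nonneg_left _ (bprod_nonneg a m t)
        exact Finset.prod_le_one (fun i _ => ffac_nonneg a _) (fun i _ => ffac_le_one a ha _)
    _ = ∏ i ∈ Finset.range m, ffac a (t + i) := mul_one _

/-- the branching set `B` meets the union of previous branching sets in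
at least `|𝓣|/(l-2)` points. -/
lemma hitU (l : ℕ) (hl : 3 ≤ l) (𝓑 : Finset (Finset α))
    (hint : ∀ B1 ∈ 𝓑, ∀ B2 ∈ 𝓑, (B1 ∩ B2).Nonempty)
    (hdegree : ∀ x : α, (𝓑.filter (fun A => x ∈ A)).card ≤ l - 1)
    (𝓣 : Finset (Finset α)) (h𝓣 : 𝓣 ⊆ 𝓑) (B : Finset α) (hB : B ∈ 𝓑) (hB𝓣 : B ∉ 𝓣) :
    𝓣.card ≤ (l - 2) * (B.filter (fun x => x ∈ 𝓣.biUnion id)).card := by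
  classical
  set U := 𝓣.biUnion id with hU
  set Bf := B.filter (fun x => x ∈ U) with hBf
  have h1 : 𝓣.card ≤ ∑ T ∈ 𝓣, (Bf ∩ T).card := by
    rw [Finset.card_eq_sum_ones]
    apply sum_le_sum
    intro T hT
    apply Nat.one_le_iff_ne_zero.mpr
    rw [← Nat.pos_iff_ne_zero, card_pos]
    obtain ⟨y, hy⟩ := hint B hB T (h𝓣 hT)
    obtain ⟨hyB, hyT⟩ := mem_inter.mp hy
    have hyU : y ∈ U := by
      rw [hU]
      exact mem_biUnion.mpr ⟨T, hT, hyT⟩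
    exact ⟨y, mem_inter.mpr ⟨mem_filter.mpr ⟨hyB, hyU⟩, hyT⟩⟩
  have h2 : ∑ T ∈ 𝓣, (Bf ∩ T).card = ∑ x ∈ Bf, (𝓣.filter (fun T => x ∈ T)).card := by
    have e1 : ∀ T ∈ 𝓣, (Bf ∩ T).card = ∑ x ∈ Bf, if x ∈ T then 1 else 0 := by
      intro T _
      rw [← filter_mem_eq_inter, Finset.card_filter]
    rw [Finset.sum_congr rfl e1, Finset.sum_comm]
    apply Finset.sum_congr rfl
    intro x _
    rw [Finset.card_filter]
  have h3 : ∀ x ∈ Bf, (𝓣.filter (fun T => x ∈ T)).card ≤ l - 2 := by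
    intro x hx
    have hxB : x ∈ B := (mem_filter.mp hx).1
    have hsub2 : 𝓣.filter (fun T => x ∈ T) ⊆ (𝓑.filter (fun A => x ∈ A)).erase B := by
      intro T hT
      obtain ⟨hT𝓣, hxT⟩ := mem_filter.mp hT
      exact mem_erase.mpr ⟨fun h => hB𝓣 (h ▸ hT𝓣), mem_filter.mpr ⟨h𝓣 hT𝓣, hxT⟩⟩
    calc (𝓣.filter (fun T => x ∈ T)).card
        ≤ ((𝓑.filter (fun A => x ∈ A)).erase B).card := card_le_card hsub2
      _ = (𝓑.filter (fun A => x ∈ A)).card - 1 :=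
          card_erase_of_mem (mem_filter.mpr ⟨hB, hxB⟩)
      _ ≤ l - 2 := by have := hdegree x; omega
  calc 𝓣.card ≤ ∑ T ∈ 𝓣, (Bf ∩ T).card := h1
    _ = ∑ x ∈ Bf, (𝓣.filter (fun T => x ∈ T)).card := h2
    _ ≤ ∑ x ∈ Bf, (l - 2) := sum_le_sum h3
    _ = Bf.card * (l - 2) := by rw [Finset.sum_const, smul_eq_mul]
    _ = (l - 2) * Bf.card := mul_comm _ _

lemma claimII (n l : ℕ) (hn : 1 ≤ n) (hl : 3 ≤ l) (𝓑 : Finset (Finset α))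
    (hunif : ∀ B ∈ 𝓑, B.card = n)
    (hint : ∀ B1 ∈ 𝓑, ∀ B2 ∈ 𝓑, (B1 ∩ B2).Nonempty)
    (hdegree : ∀ x : α, (𝓑.filter (fun A => x ∈ A)).card ≤ l - 1) :
    ∀ (s : ℕ) (𝓖 : Finset (Finset α)), 𝓖.card ≤ s → 𝓖 ⊆ 𝓑 →
      ∀ (𝓣 : Finset (Finset α)), 𝓣 ⊆ 𝓑 → Disjoint 𝓣 𝓖 →
      Zw n (𝓣.biUnion id) 𝓖
        ≤ (1 + bprod (((l:ℝ) - 2) * n) ((𝓖.card + l - 2)/(l-1)) 𝓣.card) / 2 := by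
  have hn0 : (0:ℝ) < n := by exact_mod_cast hn
  have hl3 : (3:ℝ) ≤ (l:ℝ) := by exact_mod_cast hl
  have ha : (0:ℝ) < ((l:ℝ) - 2) * n := by nlinarith
  intro s
  induction s with
  | zero =>
    intro 𝓖 hc _ 𝓣 _ _
    rw [card_eq_zero.mp (Nat.le_zero.mp hc)]
    rw [Zw_empty_fam]
    have hq0 : ((∅:Finset (Finset α)).card + l - 2)/(l-1) = 0 :=
      Nat.div_eq_of_lt (by simp; omega)
    rw [hq0]
    unfold bprod
    rw [Finset.prod_range_zero]
    norm_num
  | succ s ih =>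
    intro 𝓖 hc hsub 𝓣 h𝓣 hdisj
    rcases 𝓖.eq_empty_or_nonempty with rfl | ⟨B, hB⟩
    · rw [Zw_empty_fam]
      have hq0 : ((∅:Finset (Finset α)).card + l - 2)/(l-1) = 0 :=
        Nat.div_eq_of_lt (by simp; omega)
      rw [hq0]
      unfold bprod
      rw [Finset.prod_range_zero]
      norm_num
    · set a := ((l:ℝ) - 2) * n with hadef
      set U := 𝓣.biUnion id with hUdef
      set t := 𝓣.card with htdef
      set Q1 := (𝓖.card + l - 2)/(l-1) with hQ1def
      have hBn : B.card = n := hunif B (hsub hB)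
      have hB𝓣 : B ∉ 𝓣 := fun h => disjoint_left.mp hdisj h hB
      have hGpos : 1 ≤ 𝓖.card := card_pos.mpr ⟨B, hB⟩
      have hQ1 : 1 ≤ Q1 := by
        rw [hQ1def, Nat.le_div_iff_mul_le (by omega : 0 < l - 1)]
        omega
      set m' := Q1 - 1 with hm'def
      -- facts about the residual families
      have hGx_ssub : ∀ x ∈ B, 𝓖.filter (fun A => x ∉ A) ⊂ 𝓖 := by
        intro x hx
        exact (Finset.ssubset_iff_of_subset (filter_subset _ _)).mpr ⟨B, hB, by simp [hx]⟩
      have hGx_card : ∀ x ∈ B, (𝓖.filter (fun A => x ∉ A)).card ≤ s := by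
        intro x hx
        have := card_lt_card (hGx_ssub x hx)
        omega
      have hGx_q : ∀ x : α, m' ≤ ((𝓖.filter (fun A => x ∉ A)).card + l - 2)/(l-1) := by
        intro x
        have hsplit : (𝓖.filter (fun A => x ∈ A)).card
            + (𝓖.filter (fun A => x ∉ A)).card = 𝓖.card := by
          exact Finset.card_filter_add_card_filter_not (p := fun A => x ∈ A)
        have hdeg' : (𝓖.filter (fun A => x ∈ A)).card ≤ l - 1 :=
          le_trans (card_le_card (filter_subset_filter _ hsub)) (hdegree x)
        have hchain : Q1 ≤ ((𝓖.filter (fun A => x ∉ A)).card + l - 2)/(l-1) + 1 := by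
          calc Q1 = (𝓖.card + l - 2)/(l-1) := hQ1def
            _ ≤ ((𝓖.filter (fun A => x ∉ A)).card + l - 2 + (l-1))/(l-1) :=
                Nat.div_le_div_right (by omega)
            _ = ((𝓖.filter (fun A => x ∉ A)).card + l - 2)/(l-1) + 1 :=
                Nat.add_div_right _ (by omega)
        omega
      -- the per-child bounds from the inductive hypothesis
      have hIH : ∀ x ∈ B, x ∉ U →
          Zw n (B ∪ U) (𝓖.filter (fun A => x ∉ A))
            ≤ (1 + bprod a m' (t+1)) / 2 := by
        intro x hx hxU
        have hdisj' : Disjoint (insert B 𝓣) (𝓖.filter (fun A => x ∉ A)) := by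
          rw [Finset.disjoint_insert_left]
          constructor
          · intro h
            exact (mem_filter.mp h).2 hx
          · exact hdisj.mono_right (filter_subset _ _)
        have h1 := ih (𝓖.filter (fun A => x ∉ A)) (hGx_card x hx)
          ((filter_subset _ _).trans hsub) (insert B 𝓣)
          (insert_subset (hsub hB) h𝓣) hdisj'
        rw [Finset.biUnion_insert, card_insert_of_notMem hB𝓣] at h1
        have h2 : bprod a (((𝓖.filter (fun A => x ∉ A)).card + l - 2)/(l-1)) (t+1)
            ≤ bprod a m' (t+1) := bprod_anti a (le_of_lt ha) (t+1) (hGx_q x)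
        calc Zw n (B ∪ U) (𝓖.filter (fun A => x ∉ A))
            ≤ (1 + bprod a (((𝓖.filter (fun A => x ∉ A)).card + l - 2)/(l-1)) (t+1)) / 2 := h1
          _ ≤ (1 + bprod a m' (t+1)) / 2 := by linarith
      -- main chain
      have hF0 : ∀ C : Finset α, (0:ℝ) ≤ (n:ℝ) ^ (-(C.card:ℤ)) :=
        fun C => zpow_nonneg (le_of_lt hn0) _
      set β' := bprod a m' (t+1) with hβ'def
      have hβ'0 : 0 ≤ β' := bprod_nonneg a m' (t+1)
      set M := (B.filter (fun x => x ∈ U)).card with hMdef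
      set K := (B.filter (fun x => ¬ x ∈ U)).card with hKdef
      have hMK : M + K = n := by
        rw [hMdef, hKdef, Finset.card_filter_add_card_filter_not (p := fun x => x ∈ U), hBn]
      have htM : t ≤ (l-2) * M :=
        hitU l hl 𝓑 hint hdegree 𝓣 h𝓣 B (hsub hB) hB𝓣
      have hKff : (K:ℝ) ≤ ffac a t * n := by
        have h1 : (t:ℝ) ≤ ((l:ℝ)-2) * M := by
          have := htM
          have h2 : ((l-2)*M : ℕ) = ((l:ℝ)-2) * M := by
            push_cast [Nat.cast_sub (by omega : 2 ≤ l)]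
            ring
          calc (t:ℝ) ≤ (((l-2)*M : ℕ) : ℝ) := by exact_mod_cast htM
            _ = ((l:ℝ)-2) * M := h2
        have hMKr : (M:ℝ) + K = n := by exact_mod_cast hMK
        have h4 : (t:ℝ)/a ≤ (M:ℝ)/n := by
          rw [div_le_div_iff₀ ha hn0, hadef]
          nlinarith [hn0.le]
        have h3 : (K:ℝ) ≤ (1 - (t:ℝ)/a) * n := by
          have h5 : (1 - (M:ℝ)/n) * n = K := by
            field_simp
            linarith
          calc (K:ℝ) = (1 - (M:ℝ)/n) * n := h5.symm
            _ ≤ (1 - (t:ℝ)/a) * n := by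
                apply mul_le_mul_of_nonneg_right _ hn0.le
                linarith
        calc (K:ℝ) ≤ (1 - (t:ℝ)/a) * n := h3
          _ ≤ ffac a t * n := by
              apply mul_le_mul_of_nonneg_right (le_max_right _ _) (le_of_lt hn0)
      have hmain : Zw n U 𝓖 ≤ (M:ℝ) * ((n:ℝ)⁻¹ * 2⁻¹)
          + (K:ℝ) * ((n:ℝ)⁻¹ * ((1 + β')/2)) := by
        calc Zw n U 𝓖 = ∑ C ∈ MCov 𝓖, (n:ℝ) ^ (-(C.card:ℤ)) * wgt U C := rfl
          _ ≤ ∑ C ∈ MCov 𝓖, ∑ x ∈ C ∩ B, (n:ℝ) ^ (-(C.card:ℤ)) *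
                (if x ∈ U then (2⁻¹:ℝ) else wgt (B ∪ U) (C.erase x)) := by
              apply sum_le_sum
              intro C hC
              rw [← Finset.mul_sum]
              exact mul_le_mul_of_nonneg_left (perC U hC hB) (hF0 C)
          _ = ∑ x ∈ B, ∑ C ∈ (MCov 𝓖).filter (fun C => x ∈ C), (n:ℝ) ^ (-(C.card:ℤ)) *
                (if x ∈ U then (2⁻¹:ℝ) else wgt (B ∪ U) (C.erase x)) :=
              swap_sum _ _ _
          _ = (∑ x ∈ B.filter (fun x => x ∈ U),
                ∑ C ∈ (MCov 𝓖).filter (fun C => x ∈ C), (n:ℝ) ^ (-(C.card:ℤ)) *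
                  (if x ∈ U then (2⁻¹:ℝ) else wgt (B ∪ U) (C.erase x)))
              + (∑ x ∈ B.filter (fun x => ¬ x ∈ U),
                ∑ C ∈ (MCov 𝓖).filter (fun C => x ∈ C), (n:ℝ) ^ (-(C.card:ℤ)) *
                  (if x ∈ U then (2⁻¹:ℝ) else wgt (B ∪ U) (C.erase x))) :=
              (Finset.sum_filter_add_sum_filter_not B (fun x => x ∈ U) _).symm
          _ ≤ (∑ _x ∈ B.filter (fun x => x ∈ U), (n:ℝ)⁻¹ * 2⁻¹)
              + (∑ _x ∈ B.filter (fun x => ¬ x ∈ U), (n:ℝ)⁻¹ * ((1 + β')/2)) := by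
              apply add_le_add
              · apply sum_le_sum
                intro x hx
                have hxU : x ∈ U := (mem_filter.mp hx).2
                have e1 : ∑ C ∈ (MCov 𝓖).filter (fun C => x ∈ C), (n:ℝ) ^ (-(C.card:ℤ)) *
                      (if x ∈ U then (2⁻¹:ℝ) else wgt (B ∪ U) (C.erase x))
                    = ∑ C ∈ (MCov 𝓖).filter (fun C => x ∈ C),
                        (n:ℝ) ^ (-(C.card:ℤ)) * 2⁻¹ :=
                  Finset.sum_congr rfl (fun C _ => by rw [if_pos hxU])
                rw [e1]
                have e2 := sum_erase_le n hn 𝓖 x (fun _ => (2⁻¹:ℝ)) (fun _ => by norm_num)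
                calc ∑ C ∈ (MCov 𝓖).filter (fun C => x ∈ C), (n:ℝ) ^ (-(C.card:ℤ)) * 2⁻¹
                    ≤ (n:ℝ)⁻¹ * ∑ D ∈ MCov (𝓖.filter (fun A => x ∉ A)),
                        (n:ℝ) ^ (-(D.card:ℤ)) * 2⁻¹ := e2
                  _ ≤ (n:ℝ)⁻¹ * 2⁻¹ := by
                      apply mul_le_mul_of_nonneg_left _ (by positivity)
                      have hZ : Zfun n (𝓖.filter (fun A => x ∉ A)) ≤ 1 :=
                        claimI n hn 𝓑 hunif _ _ le_rfl ((filter_subset _ _).trans hsub)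
                      have hZ0 : 0 ≤ Zfun n (𝓖.filter (fun A => x ∉ A)) := Zfun_nonneg _ _
                      have e4 : ∑ D ∈ MCov (𝓖.filter (fun A => x ∉ A)),
                            (n:ℝ) ^ (-(D.card:ℤ)) * 2⁻¹
                          = Zfun n (𝓖.filter (fun A => x ∉ A)) * 2⁻¹ := by
                        rw [Zfun, ← Finset.sum_mul]
                      rw [e4]
                      nlinarith
              · apply sum_le_sum
                intro x hx
                obtain ⟨hxB, hxU⟩ := mem_filter.mp hx
                have e1 : ∑ C ∈ (MCov 𝓖).filter (fun C => x ∈ C), (n:ℝ) ^ (-(C.card:ℤ)) *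
                      (if x ∈ U then (2⁻¹:ℝ) else wgt (B ∪ U) (C.erase x))
                    = ∑ C ∈ (MCov 𝓖).filter (fun C => x ∈ C),
                        (n:ℝ) ^ (-(C.card:ℤ)) * wgt (B ∪ U) (C.erase x) :=
                  Finset.sum_congr rfl (fun C _ => by rw [if_neg hxU])
                rw [e1]
                calc ∑ C ∈ (MCov 𝓖).filter (fun C => x ∈ C),
                      (n:ℝ) ^ (-(C.card:ℤ)) * wgt (B ∪ U) (C.erase x)
                    ≤ (n:ℝ)⁻¹ * ∑ D ∈ MCov (𝓖.filter (fun A => x ∉ A)),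
                        (n:ℝ) ^ (-(D.card:ℤ)) * wgt (B ∪ U) D :=
                      sum_erase_le n hn 𝓖 x (wgt (B ∪ U)) (wgt_nonneg _)
                  _ = (n:ℝ)⁻¹ * Zw n (B ∪ U) (𝓖.filter (fun A => x ∉ A)) := rfl
                  _ ≤ (n:ℝ)⁻¹ * ((1 + β')/2) :=
                      mul_le_mul_of_nonneg_left (hIH x hxB hxU) (by positivity)
          _ = (M:ℝ) * ((n:ℝ)⁻¹ * 2⁻¹) + (K:ℝ) * ((n:ℝ)⁻¹ * ((1 + β')/2)) := by
              rw [Finset.sum_const, Finset.sum_const, nsmul_eq_mul, nsmul_eq_mul]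
      have hb : bprod a Q1 t = ffac a t * β' := by
        rw [hβ'def, ← bprod_succ]
        congr 1
        omega
      have hfinal : (M:ℝ) * ((n:ℝ)⁻¹ * 2⁻¹) + (K:ℝ) * ((n:ℝ)⁻¹ * ((1 + β')/2))
          ≤ (1 + bprod a Q1 t)/2 := by
        have hMr : (M:ℝ) = n - K := by
          have : (M:ℝ) + K = n := by exact_mod_cast hMK
          linarith
        have hKb : (K:ℝ) * β' ≤ (ffac a t * n) * β' :=
          mul_le_mul_of_nonneg_right hKff hβ'0
        have hne : (n:ℝ) ≠ 0 := ne_of_gt hn0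
        have e3 : (M:ℝ) * ((n:ℝ)⁻¹ * 2⁻¹) + (K:ℝ) * ((n:ℝ)⁻¹ * ((1 + β')/2))
            = ((n:ℝ) + K * β') * ((n:ℝ)⁻¹ * 2⁻¹) := by
          rw [hMr]; ring
        rw [e3, hb]
        calc ((n:ℝ) + (K:ℝ) * β') * ((n:ℝ)⁻¹ * 2⁻¹)
            ≤ ((n:ℝ) + (ffac a t * n) * β') * ((n:ℝ)⁻¹ * 2⁻¹) := by
              apply mul_le_mul_of_nonneg_right _ (by positivity)
              linarith
          _ = (1 + ffac a t * β')/2 := by field_simp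
      exact le_trans hmain hfinal

lemma ffac_le_exp (a : ℝ) (j : ℕ) : ffac a j ≤ Real.exp (-((j:ℝ)/a)) := by
  apply max_le (Real.exp_nonneg _)
  have := Real.add_one_le_exp (-((j:ℝ)/a))
  linarith

lemma bprod_le_exp (a : ℝ) (m : ℕ) :
    bprod a m 0 ≤ Real.exp (-((∑ i ∈ Finset.range m, (i:ℝ))/a)) := by
  unfold bprod
  have h1 : ∀ i ∈ Finset.range m, ffac a (0 + i) ≤ Real.exp (-((i:ℝ)/a)) := by
    intro i _
    rw [zero_add]
    exact ffac_le_exp a i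
  calc ∏ i ∈ Finset.range m, ffac a (0 + i)
      ≤ ∏ i ∈ Finset.range m, Real.exp (-((i:ℝ)/a)) :=
        Finset.prod_le_prod (fun i _ => ffac_nonneg a _) h1
    _ = Real.exp (∑ i ∈ Finset.range m, -((i:ℝ)/a)) := (Real.exp_sum _ _).symm
    _ = Real.exp (-((∑ i ∈ Finset.range m, (i:ℝ))/a)) := by
        congr 1
        rw [Finset.sum_div, ← Finset.sum_neg_distrib]

end AuxDefs

set_option maxHeartbeats 1000000 in
theorem stmt13 [Fintype α] [DecidableEq α] (n l r : ℕ) (hn : 1 ≤ n) (hl : 1 ≤ l)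
    (hr : 2 * l ≤ r) (hrn : r ^ 2 ≤ l ^ 3 * n)
    (𝓑 : Finset (Finset α)) (hcard : 𝓑.card = r) (hunif : ∀ B ∈ 𝓑, B.card = n)
    (hint : ∀ B1 ∈ 𝓑, ∀ B2 ∈ 𝓑, (B1 ∩ B2).Nonempty)
    (hdeg : ∀ 𝓢 ⊆ 𝓑, 𝓢.card = l → ∀ x : α, ¬ ∀ B ∈ 𝓢, x ∈ B) :
    covWeight n (n : ℝ) 𝓑 ≤ Real.exp (-(r : ℝ) ^ 2 / (10 * (l : ℝ) ^ 3 * n)) := by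
  -- first: l ≤ 2 contradicts the hypotheses
  have hl3 : 3 ≤ l := by
    by_contra hcon
    push_neg at hcon
    interval_cases l
    · -- l = 1 : each member would be empty
      have hBne : 𝓑.Nonempty := card_pos.mp (by omega)
      obtain ⟨B, hB⟩ := hBne
      obtain ⟨x, hx⟩ := hint B hB B hB
      have hxB : x ∈ B := (mem_inter.mp hx).1
      exact hdeg {B} (singleton_subset_iff.mpr hB) (card_singleton B) x
        (fun B' hB' => (mem_singleton.mp hB') ▸ hxB)
    · -- l = 2 : two distinct members would be disjoint
      have h2 : 1 < 𝓑.card := by omega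
      obtain ⟨B₁, hB₁, B₂, hB₂, hne⟩ := Finset.one_lt_card.mp h2
      obtain ⟨x, hx⟩ := hint B₁ hB₁ B₂ hB₂
      obtain ⟨hx1, hx2⟩ := mem_inter.mp hx
      apply hdeg {B₁, B₂} (insert_subset hB₁ (singleton_subset_iff.mpr hB₂))
        (card_pair hne) x
      intro B hB
      rcases mem_insert.mp hB with rfl | hB'
      · exact hx1
      · exact (mem_singleton.mp hB') ▸ hx2
  -- degree bound
  have hdegree : ∀ x : α, (𝓑.filter (fun A => x ∈ A)).card ≤ l - 1 := by
    intro x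
    by_contra h
    push_neg at h
    obtain ⟨𝓢, h𝓢sub, h𝓢card⟩ :=
      Finset.exists_subset_card_eq (s := 𝓑.filter (fun A => x ∈ A)) (n := l) (by omega)
    exact hdeg 𝓢 (h𝓢sub.trans (filter_subset _ _)) h𝓢card x
      (fun B hB => (mem_filter.mp (h𝓢sub hB)).2)
  -- setup
  have hn0 : (0:ℝ) < n := by exact_mod_cast hn
  have hl3r : (3:ℝ) ≤ (l:ℝ) := by exact_mod_cast hl3
  have ha : (0:ℝ) < ((l:ℝ) - 2) * n := by nlinarith
  set a : ℝ := ((l:ℝ) - 2) * n with hadef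
  set Q : ℕ := (r + l - 2)/(l-1) with hQdef
  -- main structural bound
  have key := claimII n l hn hl3 𝓑 hunif hint hdegree 𝓑.card 𝓑 le_rfl subset_rfl
    ∅ (empty_subset _) (disjoint_empty_left _)
  simp only [Finset.biUnion_empty, Finset.card_empty] at key
  rw [hcard] at key
  -- covWeight is at most Zw n ∅ 𝓑
  have h0 : covWeight n (n:ℝ) 𝓑 ≤ Zw n ∅ 𝓑 := by
    unfold covWeight Zw
    have hsub : minCovers n 𝓑 ⊆ MCov 𝓑 := by
      intro C hC
      simp only [minCovers, Finset.mem_filter, Finset.mem_univ, true_and] at hC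
      exact mem_MCov.mpr ⟨hC.2.1, hC.2.2⟩
    calc ∑ C ∈ minCovers n 𝓑, (n:ℝ) ^ (-(C.card:ℤ))
        = ∑ C ∈ minCovers n 𝓑, (n:ℝ) ^ (-(C.card:ℤ)) * wgt ∅ C := by
          apply Finset.sum_congr rfl
          intro C _
          unfold wgt
          rw [inter_empty, if_neg Finset.not_nonempty_empty, mul_one]
      _ ≤ ∑ C ∈ MCov 𝓑, (n:ℝ) ^ (-(C.card:ℤ)) * wgt ∅ C := by
          apply Finset.sum_le_sum_of_subset_of_nonneg hsub
          intro C _ _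
          exact mul_nonneg (zpow_nonneg hn0.le _) (wgt_nonneg _ _)
  -- numeric facts about Q
  have hQl : r ≤ (l-1) * Q := by
    have h1 := Nat.div_add_mod (r + l - 2) (l-1)
    rw [← hQdef] at h1
    have h2 : (r + l - 2) % (l-1) < l - 1 := Nat.mod_lt _ (by omega)
    obtain ⟨P, hP⟩ : ∃ P, (l-1) * Q = P := ⟨_, rfl⟩
    rw [hP] at h1 ⊢
    omega
  have hQ3 : 3 ≤ Q := by
    by_contra hcon
    push_neg at hcon
    have hA : (l-1) * Q ≤ (l-1) * 2 := Nat.mul_le_mul_left _ (by omega)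
    have hB := le_trans hQl hA
    omega
  have hQlr : (r:ℝ) ≤ ((l:ℝ)-1) * Q := by
    have := hQl
    have h2 : (((l-1)*Q : ℕ) : ℝ) = ((l:ℝ)-1) * Q := by
      push_cast [Nat.cast_sub (by omega : 1 ≤ l)]
      ring
    calc (r:ℝ) ≤ (((l-1)*Q : ℕ) : ℝ) := by exact_mod_cast hQl
      _ = ((l:ℝ)-1) * Q := h2
  have hQ3r : (3:ℝ) ≤ (Q:ℝ) := by exact_mod_cast hQ3
  -- Gauss sum
  have hsum : (∑ i ∈ Finset.range Q, (i:ℝ)) = (Q:ℝ) * ((Q:ℝ)-1)/2 := by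
    have h := Finset.sum_range_id_mul_two Q
    have h4 := congrArg (Nat.cast : ℕ → ℝ) h
    push_cast [Nat.cast_sub (by omega : 1 ≤ Q)] at h4
    linarith [h4]
  -- the abbreviation d for the exponent
  set d : ℝ := (r:ℝ)^2 / (10 * (l:ℝ)^3 * n) with hddef
  have hd0 : 0 ≤ d := by positivity
  have hrnr : (r:ℝ)^2 ≤ (l:ℝ)^3 * n := by exact_mod_cast hrn
  have hd10 : d ≤ 1/10 := by
    rw [hddef, div_le_iff₀ (by positivity)]
    nlinarith
  -- the key quantitative inequality
  have hE : (5/2) * d ≤ ((Q:ℝ) * ((Q:ℝ)-1)/2) / a := by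
    have hq0 : (0:ℝ) ≤ (Q:ℝ) := by positivity
    have e1 : (r:ℝ)^2 ≤ ((l:ℝ)-1)^2 * (Q:ℝ)^2 := by nlinarith [hQlr, (Nat.cast_nonneg r : (0:ℝ) ≤ (r:ℝ))]
    have e2 : ((l:ℝ)-2) * ((l:ℝ)-1)^2 ≤ (l:ℝ)^3 := by nlinarith
    have e3 : (Q:ℝ)^2 ≤ 2 * (Q:ℝ) * ((Q:ℝ)-1) := by nlinarith
    have c1 : (r:ℝ)^2 * (((l:ℝ)-2)*n) ≤ (((l:ℝ)-1)^2 * (Q:ℝ)^2) * (((l:ℝ)-2)*n) :=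
      mul_le_mul_of_nonneg_right e1 ha.le
    have c3 : (((l:ℝ)-2) * ((l:ℝ)-1)^2) * ((Q:ℝ)^2 * n) ≤ (l:ℝ)^3 * ((Q:ℝ)^2*n) :=
      mul_le_mul_of_nonneg_right e2 (by positivity)
    have c4 : (l:ℝ)^3 * ((Q:ℝ)^2*n) ≤ (l:ℝ)^3 * ((2*(Q:ℝ)*((Q:ℝ)-1))*n) := by
      apply mul_le_mul_of_nonneg_left _ (by positivity)
      exact mul_le_mul_of_nonneg_right e3 hn0.le
    have hgoal : (r:ℝ)^2 * a ≤ ((Q:ℝ)*((Q:ℝ)-1)/2) * (4 * (l:ℝ)^3 * n) := by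
      rw [hadef]
      nlinarith [c1, c3, c4]
    have e5 : (5/2) * d = (r:ℝ)^2 / (4 * (l:ℝ)^3 * n) := by
      rw [hddef]
      ring
    rw [e5, div_le_div_iff₀ (by positivity) ha]
    exact hgoal
  -- final chain of numeric estimates
  have hbE : bprod a Q 0 ≤ Real.exp (-(5/2*d)) := by
    calc bprod a Q 0 ≤ Real.exp (-((∑ i ∈ Finset.range Q, (i:ℝ))/a)) := bprod_le_exp a Q
      _ = Real.exp (-(((Q:ℝ)*((Q:ℝ)-1)/2)/a)) := by rw [hsum]
      _ ≤ Real.exp (-(5/2*d)) := by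
          apply Real.exp_le_exp.mpr
          linarith [hE]
  have h2pos : (0:ℝ) < 1 + 5/2*d := by linarith
  have hexp2 : Real.exp (-(5/2*d)) ≤ 1/(1 + 5/2*d) := by
    have h1 := Real.add_one_le_exp (5/2*d)
    rw [Real.exp_neg, one_div]
    exact inv_anti₀ h2pos (by linarith)
  have h3 : 1/(1 + 5/2*d) ≤ 1 - 2*d := by
    rw [div_le_iff₀ h2pos]
    nlinarith
  have hβ : bprod a Q 0 ≤ 1 - 2*d := le_trans hbE (le_trans hexp2 h3)
  rw [← hQdef, ← hadef] at key
  have hfin1 : covWeight n (n:ℝ) 𝓑 ≤ 1 - d := by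
    calc covWeight n (n:ℝ) 𝓑 ≤ Zw n ∅ 𝓑 := h0
      _ ≤ (1 + bprod a Q 0)/2 := key
      _ ≤ (1 + (1 - 2*d))/2 := by linarith
      _ = 1 - d := by ring
  have hfin2 : 1 - d ≤ Real.exp (-d) := by
    have := Real.add_one_le_exp (-d)
    linarith
  have hgoalform : -(r:ℝ)^2 / (10*(l:ℝ)^3*n) = -d := by
    rw [hddef]
    ring
  rw [hgoalform]
  exact le_trans hfin1 hfin2
end

section
/- Let $n\ge 1$, $l\ge 1$, and $r\ge 2l$ with $r^2\le l^3 n$. Let $\mathcal{B}$ be an $n$-uniform intersecting family of size $r$ in which every $l$ distinct sets have empty intersection. Then for every integer $k\le r/(20 l^3)$, we have $c_{n-k}(\mathcal{B})\le 1$. -/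
open Finset

variable {α : Type*}

set_option linter.unusedSectionVars false
set_option linter.unusedVariables false

namespace Stmt14Aux

variable [Fintype α] [DecidableEq α]

def unc (𝓑 : Finset (Finset α)) (X : Finset α) : Finset (Finset α) :=
  𝓑.filter fun B => B ∩ X = ∅

noncomputable def nxt (𝓑 : Finset (Finset α)) (X : Finset α) : Finset α :=
  if h : (unc 𝓑 X).Nonempty then h.choose else ∅

lemma mem_unc {𝓑 : Finset (Finset α)} {X : Finset α} {B : Finset α} :
    B ∈ unc 𝓑 X ↔ B ∈ 𝓑 ∧ B ∩ X = ∅ := Finset.mem_filter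

lemma nxt_mem_unc {𝓑 : Finset (Finset α)} {X : Finset α} (h : (unc 𝓑 X).Nonempty) :
    nxt 𝓑 X ∈ unc 𝓑 X := by
  rw [nxt, dif_pos h]; exact h.choose_spec

lemma nxt_mem_fam {𝓑 : Finset (Finset α)} {X : Finset α} (h : (unc 𝓑 X).Nonempty) :
    nxt 𝓑 X ∈ 𝓑 := (mem_unc.mp (nxt_mem_unc h)).1

lemma nxt_disj {𝓑 : Finset (Finset α)} {X : Finset α} (h : (unc 𝓑 X).Nonempty) :
    nxt 𝓑 X ∩ X = ∅ := (mem_unc.mp (nxt_mem_unc h)).2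

def Run (𝓑 : Finset (Finset α)) : List α → Prop
  | [] => True
  | (x :: xs) => Run 𝓑 xs ∧ ∃ h : (unc 𝓑 xs.toFinset).Nonempty, x ∈ nxt 𝓑 xs.toFinset

lemma mem_minCovers {n : ℕ} {𝓕 : Finset (Finset α)} {C : Finset α} :
    C ∈ minCovers n 𝓕 ↔ C.card ≤ n ∧ IsCover C 𝓕 ∧ ∀ C' ⊆ C, IsCover C' 𝓕 → C' = C := by
  simp [minCovers]

noncomputable def gsetsL (𝓑 : Finset (Finset α)) : List α → Finset (Finset α)
  | [] => ∅
  | (_ :: xs) => insert (nxt 𝓑 xs.toFinset) (gsetsL 𝓑 xs)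

def CFree (𝓑 : Finset (Finset α)) : List α → Prop
  | [] => True
  | (x :: xs) => CFree 𝓑 xs ∧ ∀ B ∈ gsetsL 𝓑 xs, x ∉ B

lemma run_suffix {𝓑 : Finset (Finset α)} : ∀ {zs ys : List α}, ys <:+ zs → Run 𝓑 zs → Run 𝓑 ys
  | [], ys, h, _ => by
      rw [List.suffix_nil.mp h]; trivial
  | (z :: zs), ys, h, hr => by
      rcases List.suffix_cons_iff.mp h with h' | h'
      · rwa [h']
      · exact run_suffix h' hr.1

lemma run_nodup {𝓑 : Finset (Finset α)} : ∀ {xs : List α}, Run 𝓑 xs → xs.Nodup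
  | [], _ => List.nodup_nil
  | (x :: xs), hr => by
      obtain ⟨hr', h, hx⟩ := hr
      refine List.nodup_cons.mpr ⟨?_, run_nodup hr'⟩
      intro hmem
      have hd := nxt_disj h
      have : x ∈ nxt 𝓑 xs.toFinset ∩ xs.toFinset := by
        rw [Finset.mem_inter, List.mem_toFinset]; exact ⟨hx, hmem⟩
      rw [hd] at this; exact absurd this (Finset.notMem_empty x)

lemma gsets_mem_fam {𝓑 : Finset (Finset α)} :
    ∀ {xs : List α}, Run 𝓑 xs → ∀ B ∈ gsetsL 𝓑 xs, B ∈ 𝓑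
  | [], _, B, hB => by simp [gsetsL] at hB
  | (x :: xs), hr, B, hB => by
      rw [gsetsL, Finset.mem_insert] at hB
      rcases hB with hB | hB
      · obtain ⟨_, h, _⟩ := hr
        rw [hB]; exact nxt_mem_fam h
      · exact gsets_mem_fam hr.1 B hB

lemma gsets_meet {𝓑 : Finset (Finset α)} :
    ∀ {xs : List α}, Run 𝓑 xs → ∀ B ∈ gsetsL 𝓑 xs, ∃ y ∈ B, y ∈ xs
  | [], _, B, hB => by simp [gsetsL] at hB
  | (x :: xs), hr, B, hB => by
      rw [gsetsL, Finset.mem_insert] at hB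
      obtain ⟨hr', h, hx⟩ := hr
      rcases hB with hB | hB
      · exact ⟨x, by rw [hB]; exact hx, List.mem_cons_self⟩
      · obtain ⟨y, hy1, hy2⟩ := gsets_meet hr' B hB
        exact ⟨y, hy1, List.mem_cons_of_mem _ hy2⟩

lemma gsets_card {𝓑 : Finset (Finset α)} :
    ∀ {xs : List α}, Run 𝓑 xs → (gsetsL 𝓑 xs).card = xs.length
  | [], _ => by simp [gsetsL]
  | (x :: xs), hr => by
      obtain ⟨hr', h, hx⟩ := hr
      rw [gsetsL]
      have hnot : nxt 𝓑 xs.toFinset ∉ gsetsL 𝓑 xs := by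
        intro hmem
        obtain ⟨y, hy1, hy2⟩ := gsets_meet hr' _ hmem
        have hd := nxt_disj h
        have : y ∈ nxt 𝓑 xs.toFinset ∩ xs.toFinset := by
          rw [Finset.mem_inter, List.mem_toFinset]; exact ⟨hy1, hy2⟩
        rw [hd] at this; exact absurd this (Finset.notMem_empty y)
      rw [Finset.card_insert_of_notMem hnot, gsets_card hr', List.length_cons]


noncomputable def build (𝓑 : Finset (Finset α)) (pk : (S : Finset α) → S.Nonempty → α)
    (C : Finset α) (hC : IsCover C 𝓑) : ℕ → List α → List α
  | 0, xs => xs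
  | (fuel+1), xs =>
    if h : (unc 𝓑 xs.toFinset).Nonempty then
      build 𝓑 pk C hC fuel
        ((pk (C ∩ nxt 𝓑 xs.toFinset) (hC _ (nxt_mem_fam h))) :: xs)
    else xs

open scoped Classical in
noncomputable def psi (𝓑 : Finset (Finset α)) (pk : (S : Finset α) → S.Nonempty → α)
    (C : Finset α) : List α :=
  if hC : IsCover C 𝓑 then build 𝓑 pk C hC 𝓑.card [] else []

variable {𝓑 : Finset (Finset α)} {pk : (S : Finset α) → S.Nonempty → α}
  {C : Finset α} {hC : IsCover C 𝓑}

lemma suffix_build : ∀ (fuel : ℕ) (xs : List α), xs <:+ build 𝓑 pk C hC fuel xs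
  | 0, xs => List.suffix_rfl
  | (fuel+1), xs => by
      rw [build]
      split
      · exact (List.suffix_cons _ _).trans (suffix_build fuel _)
      · exact List.suffix_rfl

lemma run_build (hpk : ∀ S h, pk S h ∈ S) :
    ∀ (fuel : ℕ) (xs : List α), Run 𝓑 xs → Run 𝓑 (build 𝓑 pk C hC fuel xs)
  | 0, xs, hr => hr
  | (fuel+1), xs, hr => by
      rw [build]
      split
      · rename_i h
        refine run_build hpk fuel _ ⟨hr, h, ?_⟩
        have := hpk (C ∩ nxt 𝓑 xs.toFinset) (hC _ (nxt_mem_fam h))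
        exact (Finset.mem_inter.mp this).2
      · exact hr

lemma points_build (hpk : ∀ S h, pk S h ∈ S) :
    ∀ (fuel : ℕ) (xs : List α), xs.toFinset ⊆ C → (build 𝓑 pk C hC fuel xs).toFinset ⊆ C
  | 0, xs, hsub => hsub
  | (fuel+1), xs, hsub => by
      rw [build]
      split
      · rename_i h
        refine points_build hpk fuel _ ?_
        rw [List.toFinset_cons]
        refine Finset.insert_subset ?_ hsub
        have := hpk (C ∩ nxt 𝓑 xs.toFinset) (hC _ (nxt_mem_fam h))
        exact (Finset.mem_inter.mp this).1
      · exact hsub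


lemma unc_anti {X Y : Finset α} (hXY : X ⊆ Y) : unc 𝓑 Y ⊆ unc 𝓑 X := by
  intro B hB
  rw [mem_unc] at hB ⊢
  refine ⟨hB.1, ?_⟩
  rw [← Finset.subset_empty, ← hB.2]
  exact Finset.inter_subset_inter Finset.Subset.rfl hXY

lemma unc_build (hpk : ∀ S h, pk S h ∈ S) :
    ∀ (fuel : ℕ) (xs : List α), (unc 𝓑 xs.toFinset).card ≤ fuel →
      unc 𝓑 (build 𝓑 pk C hC fuel xs).toFinset = ∅
  | 0, xs, hle => by
      rw [build]
      exact Finset.card_eq_zero.mp (Nat.le_zero.mp hle)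
  | (fuel+1), xs, hle => by
      rw [build]
      split
      · rename_i h
        set x := pk (C ∩ nxt 𝓑 xs.toFinset) (hC _ (nxt_mem_fam h)) with hxdef
        have hxmem : x ∈ nxt 𝓑 xs.toFinset :=
          (Finset.mem_inter.mp (hpk (C ∩ nxt 𝓑 xs.toFinset) (hC _ (nxt_mem_fam h)))).2
        refine unc_build hpk fuel _ ?_
        have hsub : unc 𝓑 (x :: xs).toFinset ⊆ (unc 𝓑 xs.toFinset).erase (nxt 𝓑 xs.toFinset) := by
          intro B hB
          rw [Finset.mem_erase]
          refine ⟨?_, unc_anti (by rw [List.toFinset_cons]; exact Finset.subset_insert _ _) hB⟩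
          rintro rfl
          rw [mem_unc] at hB
          have hx2 : x ∈ nxt 𝓑 xs.toFinset ∩ (x :: xs).toFinset := by
            rw [Finset.mem_inter, List.toFinset_cons]
            exact ⟨hxmem, Finset.mem_insert_self _ _⟩
          rw [hB.2] at hx2
          exact absurd hx2 (Finset.notMem_empty x)
        calc (unc 𝓑 (x :: xs).toFinset).card
            ≤ ((unc 𝓑 xs.toFinset).erase (nxt 𝓑 xs.toFinset)).card := Finset.card_le_card hsub
          _ = (unc 𝓑 xs.toFinset).card - 1 := Finset.card_erase_of_mem (nxt_mem_unc h)
          _ ≤ fuel := by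
              have := Finset.card_pos.mpr h
              omega
      · rename_i h
        exact Finset.not_nonempty_iff_eq_empty.mp h

lemma pick_build (hpk : ∀ S h, pk S h ∈ S) :
    ∀ (fuel : ℕ) (xs : List α) (ys : List α) (y : α),
      (y :: ys) <:+ build 𝓑 pk C hC fuel xs → xs <:+ ys →
      ∀ hne : (C ∩ nxt 𝓑 ys.toFinset).Nonempty, y = pk (C ∩ nxt 𝓑 ys.toFinset) hne
  | 0, xs, ys, y, hsuf, hxs, hne => by
      rw [build] at hsuf
      have h1 := hsuf.length_le
      have h2 := hxs.length_le
      simp only [List.length_cons] at h1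
      omega
  | (fuel+1), xs, ys, y, hsuf, hxs, hne => by
      rw [build] at hsuf
      split at hsuf
      · rename_i h
        set z := pk (C ∩ nxt 𝓑 xs.toFinset) (hC _ (nxt_mem_fam h)) with hzdef
        by_cases hlen : ys.length = xs.length
        · have hysxs : xs = ys := hxs.eq_of_length hlen.symm
          subst hysxs
          have hzsuf : (z :: xs) <:+ build 𝓑 pk C hC fuel (z :: xs) := suffix_build fuel _
          have hcomp := List.suffix_or_suffix_of_suffix hsuf hzsuf
          have heq : y :: xs = z :: xs := by
            rcases hcomp with hc | hc
            · exact hc.eq_of_length (by simp)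
            · exact (hc.eq_of_length (by simp)).symm
          have hyz : y = z := by injection heq
          rw [hyz, hzdef]
        · have hlt : xs.length < ys.length := by
            have := hxs.length_le; omega
          have hys_suf : ys <:+ build 𝓑 pk C hC fuel (z :: xs) :=
            (List.suffix_cons y ys).trans hsuf
          have hzxs_suf : (z :: xs) <:+ build 𝓑 pk C hC fuel (z :: xs) := suffix_build fuel _
          have hzys : (z :: xs) <:+ ys := by
            rcases List.suffix_or_suffix_of_suffix hzxs_suf hys_suf with hc | hc
            · exact hc
            · have hlen2 : ys.length = (z :: xs).length := by
                have := hc.length_le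
                simp only [List.length_cons] at this ⊢
                omega
              exact (hc.eq_of_length hlen2) ▸ List.suffix_rfl
          exact pick_build hpk fuel (z :: xs) ys y hsuf hzys hne
      · have h1 := hsuf.length_le
        have h2 := hxs.length_le
        rw [List.length_cons] at h1
        omega



lemma psi_eq (hC' : IsCover C 𝓑) : psi 𝓑 pk C = build 𝓑 pk C hC' 𝓑.card [] := by
  rw [psi, dif_pos hC']

lemma run_psi (hC' : IsCover C 𝓑) (hpk : ∀ S h, pk S h ∈ S) : Run 𝓑 (psi 𝓑 pk C) := by
  rw [psi_eq hC']
  exact run_build hpk _ _ trivial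

lemma unc_psi (hC' : IsCover C 𝓑) (hpk : ∀ S h, pk S h ∈ S) :
    unc 𝓑 (psi 𝓑 pk C).toFinset = ∅ := by
  rw [psi_eq hC']
  exact unc_build hpk _ _ (Finset.card_le_card (Finset.filter_subset _ _))

lemma pick_psi (hC' : IsCover C 𝓑) (hpk : ∀ S h, pk S h ∈ S)
    {ys : List α} {y : α} (hsuf : (y :: ys) <:+ psi 𝓑 pk C)
    (hne : (C ∩ nxt 𝓑 ys.toFinset).Nonempty) : y = pk (C ∩ nxt 𝓑 ys.toFinset) hne := by
  rw [psi_eq hC'] at hsuf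
  exact pick_build hpk _ _ _ _ hsuf (List.nil_suffix) hne

lemma toFinset_psi (hC' : IsCover C 𝓑) (hpk : ∀ S h, pk S h ∈ S)
    (hmin : ∀ C' ⊆ C, IsCover C' 𝓑 → C' = C) :
    (psi 𝓑 pk C).toFinset = C := by
  have hsub : (psi 𝓑 pk C).toFinset ⊆ C := by
    rw [psi_eq hC']
    exact points_build hpk _ _ (by simp)
  refine hmin _ hsub ?_
  intro A hA
  by_contra hne
  have hmem : A ∈ unc 𝓑 (psi 𝓑 pk C).toFinset := by
    rw [mem_unc]
    refine ⟨hA, Finset.not_nonempty_iff_eq_empty.mp ?_⟩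
    rwa [Finset.inter_comm]
  rw [unc_psi hC' hpk] at hmem
  exact absurd hmem (Finset.notMem_empty A)

lemma length_psi (hC' : IsCover C 𝓑) (hpk : ∀ S h, pk S h ∈ S)
    (hmin : ∀ C' ⊆ C, IsCover C' 𝓑 → C' = C) :
    (psi 𝓑 pk C).length = C.card := by
  conv_rhs => rw [← toFinset_psi hC' hpk hmin]
  exact (List.toFinset_card_of_nodup (run_nodup (run_psi hC' hpk))).symm

lemma exists_cons_suffix {xs zs : List α} (h : xs <:+ zs) (hne : xs ≠ zs) :
    ∃ y, (y :: xs) <:+ zs := by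
  induction zs with
  | nil => exact absurd (List.suffix_nil.mp h) hne
  | cons z zs ih =>
      rcases List.suffix_cons_iff.mp h with h' | h'
      · exact absurd h' hne
      · by_cases hxz : xs = zs
        · subst hxz; exact ⟨z, List.suffix_rfl⟩
        · obtain ⟨y, hy⟩ := ih h' hxz
          exact ⟨y, hy.trans (List.suffix_cons _ _)⟩

lemma not_cfree_struct {𝓑 : Finset (Finset α)} {xs : List α} (h : ¬ CFree 𝓑 xs) :
    ∃ y ys, (y :: ys) <:+ xs ∧ ∃ B ∈ gsetsL 𝓑 ys, y ∈ B := by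
  induction xs with
  | nil => exact absurd trivial h
  | cons x xs ih =>
      rw [CFree] at h
      push_neg at h
      by_cases hx : CFree 𝓑 xs
      · obtain ⟨B, hB1, hB2⟩ := h hx
        exact ⟨x, xs, List.suffix_rfl, B, hB1, hB2⟩
      · obtain ⟨y, ys, hsuf, hB⟩ := ih hx
        exact ⟨y, ys, hsuf.trans (List.suffix_cons _ _), hB⟩

lemma gsetsL_struct {𝓑 : Finset (Finset α)} {ys : List α} {B : Finset α}
    (hB : B ∈ gsetsL 𝓑 ys) :
    ∃ z zs, (z :: zs) <:+ ys ∧ B = nxt 𝓑 zs.toFinset := by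
  induction ys with
  | nil => simp [gsetsL] at hB
  | cons y ys ih =>
      rw [gsetsL, Finset.mem_insert] at hB
      rcases hB with hB | hB
      · exact ⟨y, ys, List.suffix_rfl, hB⟩
      · obtain ⟨z, zs, hsuf, hzs⟩ := ih hB
        exact ⟨z, zs, hsuf.trans (List.suffix_cons _ _), hzs⟩


lemma psi_eq_of_leaf {xs : List α} (hC' : IsCover C 𝓑) (hpk : ∀ S h, pk S h ∈ S)
    (hleaf : unc 𝓑 xs.toFinset = ∅) (hsuf : xs <:+ psi 𝓑 pk C) : psi 𝓑 pk C = xs := by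
  by_contra hne
  obtain ⟨y, hy⟩ := exists_cons_suffix hsuf (fun h => hne h.symm)
  have hrun : Run 𝓑 (y :: xs) := run_suffix hy (run_psi hC' hpk)
  obtain ⟨h, _⟩ := hrun.2
  rw [hleaf] at h
  exact absurd h (by simp [Finset.not_nonempty_empty])

lemma key_not_cfree {pk1 pk2 : (S : Finset α) → S.Nonempty → α}
    (hpk1 : ∀ S h, pk1 S h ∈ S) (hpk2 : ∀ S h, pk2 S h ∈ S)
    (hpk12 : ∀ (S : Finset α) (h : S.Nonempty), pk1 S h = pk2 S h → ∀ w ∈ S, w = pk1 S h)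
    {C : Finset α} (hC' : IsCover C 𝓑) (hmin : ∀ C' ⊆ C, IsCover C' 𝓑 → C' = C)
    (heq : psi 𝓑 pk1 C = psi 𝓑 pk2 C) (hncf : ¬ CFree 𝓑 (psi 𝓑 pk1 C)) : False := by
  set xs := psi 𝓑 pk1 C with hxs
  have hrun : Run 𝓑 xs := run_psi hC' hpk1
  have htf : xs.toFinset = C := toFinset_psi hC' hpk1 hmin
  obtain ⟨y, ys, hsufy, B, hBg, hyB⟩ := not_cfree_struct hncf
  obtain ⟨z, zs, hsufz, hBz⟩ := gsetsL_struct hBg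
  have hsufz' : (z :: zs) <:+ xs := hsufz.trans ((List.suffix_cons y ys).trans hsufy)
  have hrunz : Run 𝓑 (z :: zs) := run_suffix hsufz' hrun
  obtain ⟨hzne, hznxt⟩ := hrunz.2
  have hBfam : B ∈ 𝓑 := by rw [hBz]; exact nxt_mem_fam hzne
  have hne : (C ∩ nxt 𝓑 zs.toFinset).Nonempty := hC' _ (nxt_mem_fam hzne)
  have hz1 : z = pk1 (C ∩ nxt 𝓑 zs.toFinset) hne := pick_psi hC' hpk1 hsufz' hne
  have hz2 : z = pk2 (C ∩ nxt 𝓑 zs.toFinset) hne := by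
    refine pick_psi hC' hpk2 ?_ hne
    rwa [← heq]
  have hall := hpk12 _ hne (by rw [← hz1, ← hz2]) y
  have hyC : y ∈ C := by
    rw [← htf, List.mem_toFinset]
    exact hsufy.mem (List.mem_cons_self)
  have hyz : y = z := by
    rw [hall (by rw [Finset.mem_inter, ← hBz]; exact ⟨hyC, hyB⟩), ← hz1]
  -- contradiction with nodup
  have hnd : (y :: ys).Nodup := (run_nodup hrun).sublist hsufy.sublist
  have hzys : z ∈ ys := hsufz.mem (List.mem_cons_self)
  rw [List.nodup_cons] at hnd
  exact hnd.1 (hyz ▸ hzys)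

/-- The product `G(d) = ∏_{j=d}^{D-1} (1 - j/((l-2)n))`. -/
noncomputable def Gfun (l n D d : ℕ) : ℝ :=
  ∏ j ∈ Finset.Ico d D, (1 - (j : ℝ) / (((l : ℝ) - 2) * n))

lemma Gfun_factor_nonneg {l n D j : ℕ} (hl3 : 3 ≤ l) (hn : 1 ≤ n)
    (hDn : D ≤ (l - 2) * n + 1) (hj : j < D) :
    0 ≤ 1 - (j : ℝ) / (((l : ℝ) - 2) * n) := by
  have hL : (1 : ℝ) ≤ (l : ℝ) - 2 := by
    have : (3 : ℝ) ≤ (l : ℝ) := by exact_mod_cast hl3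
    linarith
  have hN : (1 : ℝ) ≤ (n : ℝ) := by exact_mod_cast hn
  have hjle : (j : ℝ) ≤ ((l : ℝ) - 2) * n := by
    have hj' : j ≤ (l - 2) * n := by omega
    have : (j : ℝ) ≤ ((l - 2) * n : ℕ) := by exact_mod_cast hj'
    calc (j : ℝ) ≤ ((l - 2) * n : ℕ) := this
      _ = ((l - 2 : ℕ) : ℝ) * n := by push_cast; ring
      _ ≤ ((l : ℝ) - 2) * n := by
          have : ((l - 2 : ℕ) : ℝ) = (l : ℝ) - 2 := by
            have : (2 : ℕ) ≤ l := by omega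
            push_cast [this]; ring
          rw [this]
  have hpos : (0 : ℝ) < ((l : ℝ) - 2) * n := by positivity
  rw [sub_nonneg, div_le_one hpos]
  exact hjle

lemma Gfun_nonneg {l n D : ℕ} (hl3 : 3 ≤ l) (hn : 1 ≤ n) (hDn : D ≤ (l - 2) * n + 1)
    (d : ℕ) : 0 ≤ Gfun l n D d := by
  refine Finset.prod_nonneg fun j hj => ?_
  exact Gfun_factor_nonneg hl3 hn hDn (Finset.mem_Ico.mp hj).2

lemma Gfun_le_one {l n D : ℕ} (hl3 : 3 ≤ l) (hn : 1 ≤ n) (hDn : D ≤ (l - 2) * n + 1)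
    (d : ℕ) : Gfun l n D d ≤ 1 := by
  refine Finset.prod_le_one (fun j hj => Gfun_factor_nonneg hl3 hn hDn (Finset.mem_Ico.mp hj).2)
    (fun j hj => ?_)
  have : (0 : ℝ) ≤ (j : ℝ) / (((l : ℝ) - 2) * n) := by
    have hL : (0 : ℝ) < (l : ℝ) - 2 := by
      have : (3 : ℝ) ≤ (l : ℝ) := by exact_mod_cast hl3
      linarith
    have hN : (0 : ℝ) < (n : ℝ) := by exact_mod_cast hn
    positivity
  linarith

lemma Gfun_succ {l n D d : ℕ} (hd : d < D) :
    Gfun l n D d = (1 - (d : ℝ) / (((l : ℝ) - 2) * n)) * Gfun l n D (d + 1) := by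
  exact Finset.prod_eq_prod_Ico_succ_bot hd _

lemma Gfun_of_le {l n D d : ℕ} (hd : D ≤ d) : Gfun l n D d = 1 := by
  rw [Gfun, Finset.Ico_eq_empty (by omega), Finset.prod_empty]

lemma covered_card {𝓑 : Finset (Finset α)} {l : ℕ} {X : Finset α}
    (hstar : ∀ x : α, (𝓑.filter (fun B => x ∈ B)).card < l)
    (h : unc 𝓑 X = ∅) : 𝓑.card ≤ X.card * (l - 1) := by
  have hsub : 𝓑 ⊆ X.biUnion (fun y => 𝓑.filter (fun B => y ∈ B)) := by
    intro B hB
    have : B ∉ unc 𝓑 X := by rw [h]; exact Finset.notMem_empty B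
    rw [mem_unc] at this
    push_neg at this
    have hBX : (B ∩ X).Nonempty := this hB
    obtain ⟨y, hy⟩ := hBX
    rw [Finset.mem_inter] at hy
    rw [Finset.mem_biUnion]
    exact ⟨y, hy.2, Finset.mem_filter.mpr ⟨hB, hy.1⟩⟩
  calc 𝓑.card ≤ (X.biUnion (fun y => 𝓑.filter (fun B => y ∈ B))).card :=
        Finset.card_le_card hsub
    _ ≤ ∑ y ∈ X, (𝓑.filter (fun B => y ∈ B)).card := Finset.card_biUnion_le
    _ ≤ ∑ y ∈ X, (l - 1) := Finset.sum_le_sum (fun y _ => by have := hstar y; omega)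
    _ = X.card * (l - 1) := by rw [Finset.sum_const, smul_eq_mul]

lemma phi_count {𝓑 : Finset (Finset α)} {l : ℕ}
    (hint : ∀ B1 ∈ 𝓑, ∀ B2 ∈ 𝓑, (B1 ∩ B2).Nonempty)
    (hstar : ∀ x : α, (𝓑.filter (fun B => x ∈ B)).card < l)
    {xs : List α} (hrun : Run 𝓑 xs) (h : (unc 𝓑 xs.toFinset).Nonempty) :
    xs.length ≤
      ((nxt 𝓑 xs.toFinset).filter (fun y => ∃ B ∈ gsetsL 𝓑 xs, y ∈ B)).card * (l - 2) := by
  classical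
  set B' := nxt 𝓑 xs.toFinset with hB'
  set Φ := B'.filter (fun y => ∃ B ∈ gsetsL 𝓑 xs, y ∈ B) with hΦ
  have hsub : gsetsL 𝓑 xs ⊆ Φ.biUnion (fun y => (𝓑.filter (fun B => y ∈ B)).erase B') := by
    intro B hB
    have hBfam : B ∈ 𝓑 := gsets_mem_fam hrun B hB
    obtain ⟨y, hy⟩ := hint B hBfam B' (nxt_mem_fam h)
    rw [Finset.mem_inter] at hy
    have hBne : B ≠ B' := by
      intro heq
      obtain ⟨w, hw1, hw2⟩ := gsets_meet hrun B hB
      have hd := nxt_disj h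
      have : w ∈ B' ∩ xs.toFinset := by
        rw [Finset.mem_inter, List.mem_toFinset]
        exact ⟨heq ▸ hw1, hw2⟩
      rw [hd] at this
      exact absurd this (Finset.notMem_empty w)
    rw [Finset.mem_biUnion]
    refine ⟨y, ?_, ?_⟩
    · rw [hΦ, Finset.mem_filter]
      exact ⟨hy.2, B, hB, hy.1⟩
    · rw [Finset.mem_erase]
      exact ⟨hBne, Finset.mem_filter.mpr ⟨hBfam, hy.1⟩⟩
  calc xs.length = (gsetsL 𝓑 xs).card := (gsets_card hrun).symm
    _ ≤ (Φ.biUnion (fun y => (𝓑.filter (fun B => y ∈ B)).erase B')).card :=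
        Finset.card_le_card hsub
    _ ≤ ∑ y ∈ Φ, ((𝓑.filter (fun B => y ∈ B)).erase B').card := Finset.card_biUnion_le
    _ ≤ ∑ y ∈ Φ, (l - 2) := by
        refine Finset.sum_le_sum (fun y hy => ?_)
        have hyB' : y ∈ B' := (Finset.mem_filter.mp hy).1
        have hB'star : B' ∈ 𝓑.filter (fun B => y ∈ B) :=
          Finset.mem_filter.mpr ⟨nxt_mem_fam h, hyB'⟩
        rw [Finset.card_erase_of_mem hB'star]
        have := hstar y
        omega
    _ = Φ.card * (l - 2) := by rw [Finset.sum_const, smul_eq_mul]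

lemma unc_cons_card_lt {𝓑 : Finset (Finset α)} {xs : List α} {y : α}
    (h : (unc 𝓑 xs.toFinset).Nonempty) (hy : y ∈ nxt 𝓑 xs.toFinset) :
    (unc 𝓑 (y :: xs).toFinset).card < (unc 𝓑 xs.toFinset).card := by
  have hsub : unc 𝓑 (y :: xs).toFinset ⊆ (unc 𝓑 xs.toFinset).erase (nxt 𝓑 xs.toFinset) := by
    intro B hB
    rw [Finset.mem_erase]
    refine ⟨?_, unc_anti (by rw [List.toFinset_cons]; exact Finset.subset_insert _ _) hB⟩
    rintro rfl
    rw [mem_unc] at hB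
    have hx2 : y ∈ nxt 𝓑 xs.toFinset ∩ (y :: xs).toFinset := by
      rw [Finset.mem_inter, List.toFinset_cons]
      exact ⟨hy, Finset.mem_insert_self _ _⟩
    rw [hB.2] at hx2
    exact absurd hx2 (Finset.notMem_empty y)
  calc (unc 𝓑 (y :: xs).toFinset).card
      ≤ ((unc 𝓑 xs.toFinset).erase (nxt 𝓑 xs.toFinset)).card := Finset.card_le_card hsub
    _ < (unc 𝓑 xs.toFinset).card :=
        Finset.card_erase_lt_of_mem (nxt_mem_unc h)


lemma mem_minCovers_cover {n : ℕ} {𝓑 : Finset (Finset α)} {C : Finset α}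
    (h : C ∈ minCovers n 𝓑) : IsCover C 𝓑 := (mem_minCovers.mp h).2.1

lemma mem_minCovers_min {n : ℕ} {𝓑 : Finset (Finset α)} {C : Finset α}
    (h : C ∈ minCovers n 𝓑) : ∀ C' ⊆ C, IsCover C' 𝓑 → C' = C := (mem_minCovers.mp h).2.2

open scoped Classical in
lemma leaf_subset {n : ℕ} (hpk : ∀ S h, pk S h ∈ S) {xs : List α}
    (hleaf : unc 𝓑 xs.toFinset = ∅) :
    (minCovers n 𝓑).filter (fun C => xs <:+ psi 𝓑 pk C) ⊆ {xs.toFinset} := by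
  intro C hC
  rw [Finset.mem_filter] at hC
  have hC' := mem_minCovers_cover hC.1
  have heq : psi 𝓑 pk C = xs := psi_eq_of_leaf hC' hpk hleaf hC.2
  rw [Finset.mem_singleton, ← heq, toFinset_psi hC' hpk (mem_minCovers_min hC.1)]

open scoped Classical in
lemma mset_partition {n : ℕ} (hpk : ∀ S h, pk S h ∈ S) {xs : List α}
    (hne : (unc 𝓑 xs.toFinset).Nonempty) :
    (minCovers n 𝓑).filter (fun C => xs <:+ psi 𝓑 pk C)
      = (nxt 𝓑 xs.toFinset).biUnion
          (fun y => (minCovers n 𝓑).filter (fun C => (y :: xs) <:+ psi 𝓑 pk C)) := by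
  apply Finset.Subset.antisymm
  · intro C hC
    rw [Finset.mem_filter] at hC
    have hC' := mem_minCovers_cover hC.1
    have hpsine : psi 𝓑 pk C ≠ xs := by
      intro heq
      rw [← heq] at hne
      rw [unc_psi hC' hpk] at hne
      exact absurd hne (by simp [Finset.not_nonempty_empty])
    obtain ⟨y, hy⟩ := exists_cons_suffix hC.2 (fun h => hpsine h.symm)
    have hCB : (C ∩ nxt 𝓑 xs.toFinset).Nonempty := hC' _ (nxt_mem_fam hne)
    have hyeq : y = pk (C ∩ nxt 𝓑 xs.toFinset) hCB := pick_psi hC' hpk hy hCB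
    have hyB : y ∈ nxt 𝓑 xs.toFinset := by
      rw [hyeq]
      exact (Finset.mem_inter.mp (hpk _ hCB)).2
    rw [Finset.mem_biUnion]
    exact ⟨y, hyB, Finset.mem_filter.mpr ⟨hC.1, hy⟩⟩
  · intro C hC
    rw [Finset.mem_biUnion] at hC
    obtain ⟨y, hy, hC⟩ := hC
    rw [Finset.mem_filter] at hC ⊢
    exact ⟨hC.1, (List.suffix_cons y xs).trans hC.2⟩

open scoped Classical in
lemma mset_disjoint {n : ℕ} {xs : List α} :
    ∀ y1 ∈ nxt 𝓑 xs.toFinset, ∀ y2 ∈ nxt 𝓑 xs.toFinset, y1 ≠ y2 →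
      Disjoint ((minCovers n 𝓑).filter (fun C => (y1 :: xs) <:+ psi 𝓑 pk C))
        ((minCovers n 𝓑).filter (fun C => (y2 :: xs) <:+ psi 𝓑 pk C)) := by
  intro y1 _ y2 _ hne
  rw [Finset.disjoint_left]
  intro C hC1 hC2
  rw [Finset.mem_filter] at hC1 hC2
  have h12 := List.suffix_or_suffix_of_suffix hC1.2 hC2.2
  apply hne
  rcases h12 with h | h
  · have := h.eq_of_length (by simp)
    injection this
  · have := h.eq_of_length (by simp)
    injection this with h1 h2
    exact h1.symm

open scoped Classical in
lemma mainB {n l D : ℕ}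
    {pk1 pk2 : (S : Finset α) → S.Nonempty → α}
    (hpk1 : ∀ S h, pk1 S h ∈ S) (hpk2 : ∀ S h, pk2 S h ∈ S)
    (hpk12 : ∀ (S : Finset α) (h : S.Nonempty), pk1 S h = pk2 S h → ∀ w ∈ S, w = pk1 S h)
    (hn : 1 ≤ n) (hl3 : 3 ≤ l)
    (hunif : ∀ B ∈ 𝓑, B.card = n)
    (hint : ∀ B1 ∈ 𝓑, ∀ B2 ∈ 𝓑, (B1 ∩ B2).Nonempty)
    (hstar : ∀ x : α, (𝓑.filter (fun B => x ∈ B)).card < l)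
    (hDn : D ≤ (l - 2) * n + 1)
    (hDleaf : ∀ X : Finset α, unc 𝓑 X = ∅ → D ≤ X.card) :
    ∀ (u : ℕ) (xs : List α), Run 𝓑 xs → (unc 𝓑 xs.toFinset).card = u →
      (∑ C ∈ (minCovers n 𝓑).filter (fun C => xs <:+ psi 𝓑 pk1 C),
          (n : ℝ) ^ (-(C.card : ℤ) + xs.length)) +
      (∑ C ∈ (minCovers n 𝓑).filter (fun C => xs <:+ psi 𝓑 pk2 C),
          (n : ℝ) ^ (-(C.card : ℤ) + xs.length))
      ≤ 1 + (if CFree 𝓑 xs then Gfun l n D xs.length else 0) := by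
  have hn0 : (0 : ℝ) < (n : ℝ) := by
    have : (1 : ℝ) ≤ (n : ℝ) := by exact_mod_cast hn
    linarith
  have hL2 : (0 : ℝ) < (l : ℝ) - 2 := by
    have : (3 : ℝ) ≤ (l : ℝ) := by exact_mod_cast hl3
    linarith
  intro u
  induction u using Nat.strong_induction_on with
  | _ u IH =>
  intro xs hrun hcard
  by_cases hu : (unc 𝓑 xs.toFinset).Nonempty
  · -- inductive case
    set d := xs.length with hd
    have hB'fam : nxt 𝓑 xs.toFinset ∈ 𝓑 := nxt_mem_fam hu
    have hB'card : (nxt 𝓑 xs.toFinset).card = n := hunif _ hB'fam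
    have hrw : ∀ (pk : (S : Finset α) → S.Nonempty → α), (∀ S h, pk S h ∈ S) →
        (∑ C ∈ (minCovers n 𝓑).filter (fun C => xs <:+ psi 𝓑 pk C),
            (n : ℝ) ^ (-(C.card : ℤ) + xs.length))
        = ∑ y ∈ nxt 𝓑 xs.toFinset, (n : ℝ)⁻¹ *
            (∑ C ∈ (minCovers n 𝓑).filter (fun C => (y :: xs) <:+ psi 𝓑 pk C),
              (n : ℝ) ^ (-(C.card : ℤ) + (y :: xs).length)) := by
      intro pk hpk
      rw [mset_partition hpk hu, Finset.sum_biUnion]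
      · refine Finset.sum_congr rfl (fun y hy => ?_)
        rw [Finset.mul_sum]
        refine Finset.sum_congr rfl (fun C hC => ?_)
        have hinv : ((n : ℝ))⁻¹ = (n : ℝ) ^ (-1 : ℤ) := by
          rw [zpow_neg_one]
        rw [hinv, ← zpow_add₀ (ne_of_gt hn0)]
        congr 1
        rw [List.length_cons]
        push_cast
        ring
      · intro y1 hy1 y2 hy2 hne
        exact mset_disjoint y1 (Finset.mem_coe.mp hy1) y2 (Finset.mem_coe.mp hy2) hne
    rw [hrw pk1 hpk1, hrw pk2 hpk2, ← Finset.sum_add_distrib]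
    have hIH : ∀ y ∈ nxt 𝓑 xs.toFinset,
        ((n : ℝ)⁻¹ *
          (∑ C ∈ (minCovers n 𝓑).filter (fun C => (y :: xs) <:+ psi 𝓑 pk1 C),
            (n : ℝ) ^ (-(C.card : ℤ) + (y :: xs).length)) +
         (n : ℝ)⁻¹ *
          (∑ C ∈ (minCovers n 𝓑).filter (fun C => (y :: xs) <:+ psi 𝓑 pk2 C),
            (n : ℝ) ^ (-(C.card : ℤ) + (y :: xs).length)))
        ≤ (n : ℝ)⁻¹ * (1 + (if CFree 𝓑 (y :: xs) then Gfun l n D (d + 1) else 0)) := by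
      intro y hy
      have hlt : (unc 𝓑 (y :: xs).toFinset).card < u := by
        rw [← hcard]
        exact unc_cons_card_lt hu hy
      have hrun' : Run 𝓑 (y :: xs) := ⟨hrun, hu, hy⟩
      have := IH _ hlt (y :: xs) hrun' rfl
      rw [List.length_cons] at this
      rw [← mul_add]
      refine mul_le_mul_of_nonneg_left ?_ (by positivity)
      exact this
    calc (∑ y ∈ nxt 𝓑 xs.toFinset, _) ≤
        ∑ y ∈ nxt 𝓑 xs.toFinset,
          (n : ℝ)⁻¹ * (1 + (if CFree 𝓑 (y :: xs) then Gfun l n D (d + 1) else 0)) :=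
          Finset.sum_le_sum hIH
      _ ≤ 1 + (if CFree 𝓑 xs then Gfun l n D xs.length else 0) := by
          by_cases hcf : CFree 𝓑 xs
          · -- CFree case
            have hcongr : ∀ y ∈ nxt 𝓑 xs.toFinset,
                (n : ℝ)⁻¹ * (1 + (if CFree 𝓑 (y :: xs) then Gfun l n D (d + 1) else 0))
                = (n : ℝ)⁻¹ * (1 + (if (∀ B ∈ gsetsL 𝓑 xs, y ∉ B) then Gfun l n D (d + 1) else 0)) := by
              intro y hy
              congr 2
              refine if_congr ?_ rfl rfl
              constructor
              · intro h; exact h.2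
              · intro h; exact ⟨hcf, h⟩
            rw [Finset.sum_congr rfl hcongr]
            have hsplit : (∑ y ∈ nxt 𝓑 xs.toFinset,
                (n : ℝ)⁻¹ * (1 + (if (∀ B ∈ gsetsL 𝓑 xs, y ∉ B) then Gfun l n D (d + 1) else 0)))
                = (n : ℝ)⁻¹ * ((n : ℝ) +
                  ((nxt 𝓑 xs.toFinset).filter (fun y => ∀ B ∈ gsetsL 𝓑 xs, y ∉ B)).card
                    * Gfun l n D (d + 1)) := by
              rw [← Finset.mul_sum]
              congr 1
              rw [Finset.sum_add_distrib, Finset.sum_const, ← Finset.sum_filter,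
                Finset.sum_const, hB'card]
              push_cast
              ring
            rw [hsplit, if_pos hcf]
            -- now the counting inequality
            set cardP := ((nxt 𝓑 xs.toFinset).filter (fun y => ∀ B ∈ gsetsL 𝓑 xs, y ∉ B)).card
              with hcardP
            set cardF := ((nxt 𝓑 xs.toFinset).filter (fun y => ∃ B ∈ gsetsL 𝓑 xs, y ∈ B)).card
              with hcardF
            have hPF : cardF + cardP = n := by
              rw [hcardP, hcardF, ← hB'card]
              have hneg : (nxt 𝓑 xs.toFinset).filter (fun y => ∀ B ∈ gsetsL 𝓑 xs, y ∉ B)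
                  = (nxt 𝓑 xs.toFinset).filter (fun y => ¬ ∃ B ∈ gsetsL 𝓑 xs, y ∈ B) := by
                refine Finset.filter_congr (fun y hy => ?_)
                constructor
                · intro h hex
                  obtain ⟨B, hB1, hB2⟩ := hex
                  exact h B hB1 hB2
                · intro h B hB1 hB2
                  exact h ⟨B, hB1, hB2⟩
              rw [hneg]
              exact Finset.card_filter_add_card_filter_not _
            have hdF : d ≤ cardF * (l - 2) := phi_count hint hstar hrun hu
            have hG1 : 0 ≤ Gfun l n D (d + 1) := Gfun_nonneg hl3 hn hDn _
            by_cases hdD : d < D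
            · rw [Gfun_succ hdD]
              have hdFR : (d : ℝ) ≤ (cardF : ℝ) * ((l : ℝ) - 2) := by
                have h2l : (2 : ℕ) ≤ l := by omega
                have : (d : ℝ) ≤ ((cardF * (l - 2) : ℕ) : ℝ) := by exact_mod_cast hdF
                calc (d : ℝ) ≤ ((cardF * (l - 2) : ℕ) : ℝ) := this
                  _ = (cardF : ℝ) * ((l : ℝ) - 2) := by
                      push_cast [h2l]
                      ring
              have hPFR : (cardF : ℝ) + cardP = (n : ℝ) := by exact_mod_cast hPF
              have hkey : (cardP : ℝ) * (n : ℝ)⁻¹ ≤ 1 - (d : ℝ) / (((l : ℝ) - 2) * n) := by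
                have hF' : (d : ℝ) / ((l : ℝ) - 2) ≤ (cardF : ℝ) := by
                  rw [div_le_iff₀ hL2]; exact hdFR
                have h1 : (cardP : ℝ) * (n : ℝ)⁻¹ = 1 - (cardF : ℝ) / n := by
                  field_simp
                  linarith
                have h2 : (d : ℝ) / (((l : ℝ) - 2) * n) = ((d : ℝ) / ((l : ℝ) - 2)) / n := by
                  rw [div_div]
                rw [h1, h2, sub_le_sub_iff_left]
                gcongr
              have hexpand : (n : ℝ)⁻¹ * ((n : ℝ) + (cardP : ℝ) * Gfun l n D (d + 1))
                  = 1 + ((cardP : ℝ) * (n : ℝ)⁻¹) * Gfun l n D (d + 1) := by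
                field_simp
              rw [hexpand]
              have := mul_le_mul_of_nonneg_right hkey hG1
              linarith
            · push_neg at hdD
              rw [Gfun_of_le hdD, Gfun_of_le (by omega)]
              have hPn : (cardP : ℝ) ≤ (n : ℝ) := by
                have : cardP ≤ n := by omega
                exact_mod_cast this
              rw [mul_one]
              rw [mul_add, inv_mul_cancel₀ (ne_of_gt hn0)]
              have : (n : ℝ)⁻¹ * (cardP : ℝ) ≤ 1 := by
                rw [← div_eq_inv_mul, div_le_one hn0]
                exact hPn
              linarith
          · -- ¬ CFree case
            have hzero : ∀ y ∈ nxt 𝓑 xs.toFinset,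
                (n : ℝ)⁻¹ * (1 + (if CFree 𝓑 (y :: xs) then Gfun l n D (d + 1) else 0))
                = (n : ℝ)⁻¹ := by
              intro y hy
              rw [if_neg (fun h => hcf h.1), add_zero, mul_one]
            rw [Finset.sum_congr rfl hzero, Finset.sum_const, hB'card, if_neg hcf, add_zero,
              nsmul_eq_mul, mul_inv_cancel₀ (ne_of_gt hn0)]
  · -- leaf case
    have hleaf : unc 𝓑 xs.toFinset = ∅ := Finset.not_nonempty_iff_eq_empty.mp hu
    have hlen : D ≤ xs.length := by
      have := hDleaf _ hleaf
      rwa [List.toFinset_card_of_nodup (run_nodup hrun)] at this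
    have hGone : Gfun l n D xs.length = 1 := Gfun_of_le hlen
    have hsum : ∀ (pk : (S : Finset α) → S.Nonempty → α), (∀ S h, pk S h ∈ S) →
        (∑ C ∈ (minCovers n 𝓑).filter (fun C => xs <:+ psi 𝓑 pk C),
          (n : ℝ) ^ (-(C.card : ℤ) + xs.length)) ≤ 1 ∧
        (0 : ℝ) ≤ (∑ C ∈ (minCovers n 𝓑).filter (fun C => xs <:+ psi 𝓑 pk C),
          (n : ℝ) ^ (-(C.card : ℤ) + xs.length)) := by
      intro pk hpk
      constructor
      · rcases Finset.subset_singleton_iff.mp (leaf_subset hpk hleaf) with h | h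
        · rw [h, Finset.sum_empty]; linarith
        · rw [h, Finset.sum_singleton]
          have hmem : xs.toFinset ∈ (minCovers n 𝓑).filter (fun C => xs <:+ psi 𝓑 pk C) := by
            rw [h]; exact Finset.mem_singleton_self _
          rw [Finset.mem_filter] at hmem
          have hcc : xs.toFinset.card = xs.length := List.toFinset_card_of_nodup (run_nodup hrun)
          rw [hcc]
          rw [neg_add_cancel, zpow_zero]
      · refine Finset.sum_nonneg (fun C hC => ?_)
        positivity
    by_cases hcf : CFree 𝓑 xs
    · rw [if_pos hcf, hGone]
      have h1 := (hsum pk1 hpk1).1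
      have h2 := (hsum pk2 hpk2).1
      linarith
    · rw [if_neg hcf, add_zero]
      -- at most one of the two is nonempty
      by_cases he1 : (minCovers n 𝓑).filter (fun C => xs <:+ psi 𝓑 pk1 C) = ∅
      · rw [he1, Finset.sum_empty, zero_add]
        exact (hsum pk2 hpk2).1
      · by_cases he2 : (minCovers n 𝓑).filter (fun C => xs <:+ psi 𝓑 pk2 C) = ∅
        · rw [he2, Finset.sum_empty, add_zero]
          exact (hsum pk1 hpk1).1
        · exfalso
          rcases Finset.subset_singleton_iff.mp (leaf_subset hpk1 hleaf) with h | h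
          · exact he1 h
          rcases Finset.subset_singleton_iff.mp (leaf_subset hpk2 hleaf) with h' | h'
          · exact he2 h'
          have hmem1 : xs.toFinset ∈ (minCovers n 𝓑).filter (fun C => xs <:+ psi 𝓑 pk1 C) := by
            rw [h]; exact Finset.mem_singleton_self _
          have hmem2 : xs.toFinset ∈ (minCovers n 𝓑).filter (fun C => xs <:+ psi 𝓑 pk2 C) := by
            rw [h']; exact Finset.mem_singleton_self _
          rw [Finset.mem_filter] at hmem1 hmem2
          have hC' := mem_minCovers_cover hmem1.1
          have hmin := mem_minCovers_min hmem1.1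
          have heq1 : psi 𝓑 pk1 xs.toFinset = xs := psi_eq_of_leaf hC' hpk1 hleaf hmem1.2
          have heq2 : psi 𝓑 pk2 xs.toFinset = xs := psi_eq_of_leaf hC' hpk2 hleaf hmem2.2
          refine key_not_cfree hpk1 hpk2 hpk12 hC' hmin (by rw [heq1, heq2]) ?_
          rw [heq1]
          exact hcf


section Pick

variable {m : ℕ} (e : α ≃ Fin m)

noncomputable def pkmin (S : Finset α) (h : S.Nonempty) : α :=
  e.symm ((S.image e).min' (h.image e))

noncomputable def pkmax (S : Finset α) (h : S.Nonempty) : α :=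
  e.symm ((S.image e).max' (h.image e))

lemma pkmin_mem (S : Finset α) (h : S.Nonempty) : pkmin e S h ∈ S := by
  obtain ⟨a, ha, hae⟩ := Finset.mem_image.mp ((S.image e).min'_mem (h.image e))
  rw [pkmin, ← hae, Equiv.symm_apply_apply]
  exact ha

lemma pkmax_mem (S : Finset α) (h : S.Nonempty) : pkmax e S h ∈ S := by
  obtain ⟨a, ha, hae⟩ := Finset.mem_image.mp ((S.image e).max'_mem (h.image e))
  rw [pkmax, ← hae, Equiv.symm_apply_apply]
  exact ha

lemma pk_singleton (S : Finset α) (h : S.Nonempty)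
    (heq : pkmin e S h = pkmax e S h) : ∀ w ∈ S, w = pkmin e S h := by
  intro w hw
  have hminmax : (S.image e).min' (h.image e) = (S.image e).max' (h.image e) := by
    have := congrArg e heq
    rwa [pkmin, pkmax, Equiv.apply_symm_apply, Equiv.apply_symm_apply] at this
  have h1 : (S.image e).min' (h.image e) ≤ e w :=
    Finset.min'_le _ _ (Finset.mem_image_of_mem e hw)
  have h2 : e w ≤ (S.image e).max' (h.image e) :=
    Finset.le_max' _ _ (Finset.mem_image_of_mem e hw)
  have : e w = (S.image e).min' (h.image e) := le_antisymm (hminmax ▸ h2) h1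
  rw [pkmin, ← this, Equiv.symm_apply_apply]

end Pick

lemma star_card_lt {𝓑 : Finset (Finset α)} {l : ℕ}
    (hdeg : ∀ 𝓢 ⊆ 𝓑, 𝓢.card = l → ∀ x : α, ¬ ∀ B ∈ 𝓢, x ∈ B) (x : α) :
    (𝓑.filter (fun B => x ∈ B)).card < l := by
  by_contra hge
  push_neg at hge
  obtain ⟨𝓣, h𝓣sub, h𝓣card⟩ := Finset.exists_subset_card_eq hge
  refine hdeg 𝓣 (h𝓣sub.trans (Finset.filter_subset _ _)) h𝓣card x (fun B hB => ?_)
  exact (Finset.mem_filter.mp (h𝓣sub hB)).2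

lemma fam_card_le {𝓑 : Finset (Finset α)} {l n : ℕ}
    (hunif : ∀ B ∈ 𝓑, B.card = n)
    (hint : ∀ B1 ∈ 𝓑, ∀ B2 ∈ 𝓑, (B1 ∩ B2).Nonempty)
    (hstar : ∀ x : α, (𝓑.filter (fun B => x ∈ B)).card < l)
    {B₀ : Finset α} (hB₀ : B₀ ∈ 𝓑) : 𝓑.card ≤ n * (l - 2) + 1 := by
  classical
  have hsub : 𝓑 ⊆ insert B₀ (B₀.biUnion (fun x => (𝓑.filter (fun B => x ∈ B)).erase B₀)) := by
    intro B hB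
    rw [Finset.mem_insert]
    by_cases hBB : B = B₀
    · exact Or.inl hBB
    · right
      obtain ⟨y, hy⟩ := hint B hB B₀ hB₀
      rw [Finset.mem_inter] at hy
      rw [Finset.mem_biUnion]
      exact ⟨y, hy.2, Finset.mem_erase.mpr ⟨hBB, Finset.mem_filter.mpr ⟨hB, hy.1⟩⟩⟩
  calc 𝓑.card ≤ (insert B₀ (B₀.biUnion (fun x => (𝓑.filter (fun B => x ∈ B)).erase B₀))).card :=
        Finset.card_le_card hsub
    _ ≤ (B₀.biUnion (fun x => (𝓑.filter (fun B => x ∈ B)).erase B₀)).card + 1 :=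
        Finset.card_insert_le _ _
    _ ≤ (∑ x ∈ B₀, ((𝓑.filter (fun B => x ∈ B)).erase B₀).card) + 1 := by
        exact Nat.add_le_add_right Finset.card_biUnion_le 1
    _ ≤ (∑ x ∈ B₀, (l - 2)) + 1 := by
        refine Nat.add_le_add_right (Finset.sum_le_sum (fun x hx => ?_)) 1
        have hB₀mem : B₀ ∈ 𝓑.filter (fun B => x ∈ B) := Finset.mem_filter.mpr ⟨hB₀, hx⟩
        rw [Finset.card_erase_of_mem hB₀mem]
        have := hstar x
        omega
    _ = n * (l - 2) + 1 := by
        rw [Finset.sum_const, smul_eq_mul, hunif _ hB₀]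

lemma minCover_card_le {n : ℕ} {𝓑 : Finset (Finset α)} {C : Finset α}
    (hC : C ∈ minCovers n 𝓑) : C.card ≤ 𝓑.card := by
  classical
  have hcov := mem_minCovers_cover hC
  have hmin := mem_minCovers_min hC
  have hwit : ∀ x ∈ C, ∃ B, B ∈ 𝓑 ∧ C.erase x ∩ B = ∅ := by
    intro x hx
    by_contra hno
    push_neg at hno
    have hcov' : IsCover (C.erase x) 𝓑 := by
      intro A hA
      exact hno A hA
    have := hmin (C.erase x) (Finset.erase_subset _ _) hcov'
    have hxin : x ∈ C.erase x := this.symm ▸ hx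
    exact absurd hxin (Finset.notMem_erase _ _)
  choose f hf1 hf2 using hwit
  refine Finset.card_le_card_of_injOn (fun x => if hx : x ∈ C then f x hx else ∅) ?_ ?_
  · intro x hx
    simp only [dif_pos (Finset.mem_coe.mp hx)]
    exact hf1 x hx
  · intro x1 hx1 x2 hx2 hfeq
    rw [Finset.mem_coe] at hx1 hx2
    simp only [dif_pos hx1, dif_pos hx2] at hfeq
    by_contra hne
    -- x1 ∈ f x1 hx1 : since C ∩ f x1 nonempty and all elements of C.erase x1 excluded
    have hx2mem : x2 ∈ f x2 hx2 := by
      obtain ⟨y, hy⟩ := hcov _ (hf1 x2 hx2)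
      rw [Finset.mem_inter] at hy
      by_cases hyx : y = x2
      · exact hyx ▸ hy.2
      · exfalso
        have : y ∈ C.erase x2 ∩ f x2 hx2 :=
          Finset.mem_inter.mpr ⟨Finset.mem_erase.mpr ⟨hyx, hy.1⟩, hy.2⟩
        rw [hf2 x2 hx2] at this
        exact absurd this (Finset.notMem_empty y)
    have : x2 ∈ C.erase x1 ∩ f x1 hx1 := by
      refine Finset.mem_inter.mpr ⟨Finset.mem_erase.mpr ⟨fun h => hne (h ▸ rfl), hx2⟩, ?_⟩
      rw [hfeq]
      exact hx2mem
    rw [hf2 x1 hx1] at this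
    exact absurd this (Finset.notMem_empty x2)

end Stmt14Aux



lemma final_numeric {G0 E N K R LL Q : ℝ} (r : ℕ)
    (hG : G0 ≤ Real.exp (-E)) (hEQ : Q / 4 ≤ E) (hE0 : 0 ≤ E)
    (hQ0 : 0 ≤ Q) (hQ1 : Q ≤ 1)
    (hQdef : Q = R ^ 2 / (LL ^ 3 * N))
    (hR : (r : ℝ) = R) (hN : 0 < N) (hK0 : 0 ≤ K) (hKN : K ≤ N / 20)
    (hLL : 0 < LL)
    (hk : K ≤ R / (20 * LL ^ 3)) (hR0 : 0 ≤ R) :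
    1 + G0 ≤ 2 * ((N - K) / N) ^ r := by
  have h1 : Real.exp (-E) ≤ 1 / (1 + E) := by
    rw [Real.exp_neg, inv_eq_one_div]
    rw [div_le_div_iff₀ (Real.exp_pos E) (by linarith)]
    have := Real.add_one_le_exp E
    linarith
  have h2 : 1 / (1 + E) ≤ 1 / (1 + Q / 4) := by
    refine one_div_le_one_div_of_le (by linarith) (by linarith)
  have h3 : 1 / (1 + Q / 4) ≤ 1 - Q / 10 := by
    rw [div_le_iff₀ (by linarith)]
    nlinarith
  have hBern : 1 - R * K / N ≤ ((N - K) / N) ^ r := by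
    have hb1 : (-2 : ℝ) ≤ -(K / N) := by
      rw [neg_le_neg_iff, div_le_iff₀ hN]
      linarith
    have hb2 := one_add_mul_le_pow hb1 r
    have hb3 : (1 : ℝ) + -(K / N) = (N - K) / N := by
      field_simp
      ring
    rw [hb3, hR] at hb2
    calc 1 - R * K / N = 1 + R * -(K / N) := by field_simp; ring
      _ ≤ ((N - K) / N) ^ r := hb2
  have hRKQ : R * K / N ≤ Q / 20 := by
    rw [hQdef, div_div, div_le_div_iff₀ hN (by positivity)]
    have hx1 : R * K ≤ R * (R / (20 * LL ^ 3)) := mul_le_mul_of_nonneg_left hk hR0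
    calc R * K * (LL ^ 3 * N * 20) ≤ R * (R / (20 * LL ^ 3)) * (LL ^ 3 * N * 20) := by
          refine mul_le_mul_of_nonneg_right hx1 (by positivity)
      _ = R ^ 2 * N := by
          field_simp
  have hT : 1 - Q / 20 ≤ ((N - K) / N) ^ r := by linarith
  linarith

set_option maxHeartbeats 1600000 in
open Stmt14Aux in
theorem stmt14 [Fintype α] [DecidableEq α] (n l r : ℕ) (hn : 1 ≤ n) (hl : 1 ≤ l)
    (hr : 2 * l ≤ r) (hrn : r ^ 2 ≤ l ^ 3 * n)
    (𝓑 : Finset (Finset α)) (hcard : 𝓑.card = r) (hunif : ∀ B ∈ 𝓑, B.card = n)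
    (hint : ∀ B1 ∈ 𝓑, ∀ B2 ∈ 𝓑, (B1 ∩ B2).Nonempty)
    (hdeg : ∀ 𝓢 ⊆ 𝓑, 𝓢.card = l → ∀ x : α, ¬ ∀ B ∈ 𝓢, x ∈ B)
    (k : ℕ) (hk : (k : ℝ) ≤ (r : ℝ) / (20 * (l : ℝ) ^ 3)) :
    covWeight n ((n : ℝ) - k) 𝓑 ≤ 1 := by
  classical
  -- degenerate cases l = 1, l = 2 are contradictory
  by_cases hl3 : 3 ≤ l
  swap
  · exfalso
    have hl12 : l = 1 ∨ l = 2 := by omega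
    rcases hl12 with rfl | rfl
    · -- l = 1
      have hBne : 𝓑.Nonempty := Finset.card_pos.mp (by omega)
      obtain ⟨B, hB⟩ := hBne
      have hBne' : B.Nonempty := Finset.card_pos.mp (by rw [hunif B hB]; omega)
      obtain ⟨x, hx⟩ := hBne'
      refine hdeg {B} (Finset.singleton_subset_iff.mpr hB) (Finset.card_singleton B) x ?_
      intro B' hB'
      rw [Finset.mem_singleton] at hB'
      rwa [hB']
    · -- l = 2
      have h2 : 1 < 𝓑.card := by omega
      obtain ⟨a, ha, b, hb, hab⟩ := Finset.one_lt_card.mp h2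
      obtain ⟨x, hx⟩ := hint a ha b hb
      rw [Finset.mem_inter] at hx
      refine hdeg {a, b} ?_ (Finset.card_pair hab) x ?_
      · intro B hB
        rcases Finset.mem_insert.mp hB with rfl | hB
        · exact ha
        · rw [Finset.mem_singleton] at hB; rwa [hB]
      · intro B hB
        rcases Finset.mem_insert.mp hB with rfl | hB
        · exact hx.1
        · rw [Finset.mem_singleton] at hB; rw [hB]; exact hx.2
  -- main case : l ≥ 3
  have hBne : 𝓑.Nonempty := Finset.card_pos.mp (by omega)
  obtain ⟨B₀, hB₀⟩ := hBne
  have hstar : ∀ x : α, (𝓑.filter (fun B => x ∈ B)).card < l := star_card_lt hdeg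
  have hr2 : r ≤ n * (l - 2) + 1 := hcard ▸ fam_card_le hunif hint hstar hB₀
  set D := r / (l - 1) with hDdef
  have hl1pos : 0 < l - 1 := by omega
  have hDn : D ≤ (l - 2) * n + 1 := by
    have h1 : D ≤ r := Nat.div_le_self _ _
    have h2 : n * (l - 2) = (l - 2) * n := Nat.mul_comm _ _
    omega
  have hDleaf : ∀ X : Finset α, unc 𝓑 X = ∅ → D ≤ X.card := by
    intro X hX
    have h1 : r ≤ X.card * (l - 1) := hcard ▸ covered_card hstar hX
    have h2 : D ≤ (X.card * (l - 1)) / (l - 1) := Nat.div_le_div_right h1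
    rwa [Nat.mul_div_cancel _ hl1pos] at h2
  -- the two pick functions
  set e := Fintype.equivFin α with he
  have hmain := mainB (𝓑 := 𝓑) (pkmin_mem e) (pkmax_mem e)
      (fun S h heq w hw => pk_singleton e S h heq w hw)
      hn hl3 hunif hint hstar hDn hDleaf ((unc 𝓑 (List.toFinset ([] : List α))).card)
      [] trivial rfl
  have hfilt : ∀ pk : (S : Finset α) → S.Nonempty → α,
      (minCovers n 𝓑).filter (fun C => ([] : List α) <:+ psi 𝓑 pk C) = minCovers n 𝓑 :=
    fun pk => Finset.filter_true_of_mem (fun C _ => List.nil_suffix)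
  have hsum_eq : ∀ pk : (S : Finset α) → S.Nonempty → α,
      (∑ C ∈ (minCovers n 𝓑).filter (fun C => ([] : List α) <:+ psi 𝓑 pk C),
        (n : ℝ) ^ (-(C.card : ℤ) + (([] : List α).length : ℤ)))
      = covWeight n (n : ℝ) 𝓑 := by
    intro pk
    rw [hfilt pk, covWeight]
    refine Finset.sum_congr rfl (fun C hC => ?_)
    norm_num
  rw [hsum_eq, hsum_eq, if_pos (show CFree 𝓑 ([] : List α) from trivial)] at hmain
  have h2cov : 2 * covWeight n (n : ℝ) 𝓑 ≤ 1 + Gfun l n D ([] : List α).length := by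
    linarith
  rw [show (([] : List α).length) = 0 from rfl] at h2cov
  -- numeric setup
  have hNpos : (0 : ℝ) < (n : ℝ) := by exact_mod_cast hn
  have hL3 : (3 : ℝ) ≤ (l : ℝ) := by exact_mod_cast hl3
  have hL2 : (0 : ℝ) < (l : ℝ) - 2 := by linarith
  have hRnn : (0 : ℝ) ≤ (r : ℝ) := by positivity
  have hrl : (r : ℝ) ≤ (n : ℝ) * (l : ℝ) := by
    have h1 : (r : ℝ) ≤ (n : ℝ) * ((l : ℝ) - 2) + 1 := by
      have : ((n * (l - 2) + 1 : ℕ) : ℝ) = (n : ℝ) * ((l : ℝ) - 2) + 1 := by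
        have h2l : (2 : ℕ) ≤ l := by omega
        push_cast [h2l]
        ring
      rw [← this]
      exact_mod_cast hr2
    have hexp : (n : ℝ) * (l : ℝ) = (n : ℝ) * ((l : ℝ) - 2) + 2 * n := by ring
    have hN1 : (1 : ℝ) ≤ (n : ℝ) := by exact_mod_cast hn
    linarith
  have hKN : (k : ℝ) ≤ (n : ℝ) / 20 := by
    have hL2sq : (1 : ℝ) ≤ (l : ℝ) ^ 2 := by nlinarith
    have h1 : (k : ℝ) ≤ (r : ℝ) / (20 * (l : ℝ) ^ 3) := hk
    have h2 : (r : ℝ) / (20 * (l : ℝ) ^ 3) ≤ (n : ℝ) * (l : ℝ) / (20 * (l : ℝ) ^ 3) := by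
      gcongr
    have h3 : (n : ℝ) * (l : ℝ) / (20 * (l : ℝ) ^ 3) = (n : ℝ) / (20 * (l : ℝ) ^ 2) := by
      field_simp
    have h4 : (n : ℝ) / (20 * (l : ℝ) ^ 2) ≤ (n : ℝ) / 20 := by
      rw [div_le_div_iff₀ (by positivity) (by norm_num)]
      nlinarith [hNpos, hL3]
    linarith
  have hK0 : (0 : ℝ) ≤ (k : ℝ) := by positivity
  have hapos : (0 : ℝ) < (n : ℝ) - k := by linarith
  -- stage 1
  have hstage1 : covWeight n ((n : ℝ) - k) 𝓑
      ≤ ((n : ℝ) / ((n : ℝ) - k)) ^ r * covWeight n (n : ℝ) 𝓑 := by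
    rw [covWeight, covWeight, Finset.mul_sum]
    refine Finset.sum_le_sum (fun C hC => ?_)
    have hcr : C.card ≤ r := hcard ▸ minCover_card_le hC
    have hid : ((n : ℝ) - k) ^ (-(C.card : ℤ))
        = ((n : ℝ) / ((n : ℝ) - k)) ^ C.card * (n : ℝ) ^ (-(C.card : ℤ)) := by
      rw [zpow_neg, zpow_neg, zpow_natCast, zpow_natCast, div_pow]
      have hne1 : ((n : ℝ) - k) ^ C.card ≠ 0 := by positivity
      have hne2 : ((n : ℝ)) ^ C.card ≠ 0 := by positivity
      field_simp
    rw [hid]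
    refine mul_le_mul_of_nonneg_right ?_ (by positivity)
    refine pow_le_pow_right₀ ?_ hcr
    rw [le_div_iff₀ hapos]
    linarith
  clear_value e
  clear hmain hfilt hsum_eq hDleaf hstar hdeg hint hunif he e hB₀ B₀
  -- split on k = 0
  by_cases hk0 : k = 0
  · subst hk0
    have hG1 : Gfun l n D 0 ≤ 1 := Gfun_le_one hl3 hn hDn 0
    have : covWeight n (n : ℝ) 𝓑 ≤ 1 := by linarith
    simpa using this
  -- k ≥ 1
  have hk1 : (1 : ℝ) ≤ (k : ℝ) := by
    have : 1 ≤ k := by omega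
    exact_mod_cast this
  have hr20 : 20 * l ^ 3 ≤ r := by
    have h1 : (20 : ℝ) * (l : ℝ) ^ 3 ≤ (r : ℝ) := by
      have h2 : (0 : ℝ) < 20 * (l : ℝ) ^ 3 := by positivity
      have h3 : (k : ℝ) * (20 * (l : ℝ) ^ 3) ≤ r := (le_div_iff₀ h2).mp hk
      nlinarith [h3, hk1, h2]
    exact_mod_cast h1
  have hD20 : 20 * l ^ 2 ≤ D := by
    rw [hDdef, Nat.le_div_iff_mul_le hl1pos]
    calc 20 * l ^ 2 * (l - 1) ≤ 20 * l ^ 2 * l := by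
          refine Nat.mul_le_mul_left _ (by omega)
      _ = 20 * l ^ 3 := by ring
      _ ≤ r := hr20
  have hlsq : 1 ≤ l ^ 2 := Nat.one_le_pow _ _ (by omega)
  have hD2 : 2 ≤ D := by
    have h1 : 20 * 1 ≤ 20 * l ^ 2 := Nat.mul_le_mul_left 20 hlsq
    omega
  have hlD : l ≤ D := by
    have h1 : l ≤ l ^ 2 := Nat.le_self_pow (by norm_num) l
    have h2 : l ^ 2 ≤ 20 * l ^ 2 := by omega
    omega
  have hrDl : r ≤ D * l := by
    have hmod : (l - 1) * D + r % (l - 1) = r := by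
      rw [hDdef]; exact Nat.div_add_mod r (l - 1)
    have hmlt : r % (l - 1) < l - 1 := Nat.mod_lt _ hl1pos
    have hstep : (l - 1) * D + D = l * D := by
      have h1 : l - 1 + 1 = l := by omega
      calc (l - 1) * D + D = ((l - 1) + 1) * D := by ring
        _ = l * D := by rw [h1]
    have h3 : (l - 2 : ℕ) ≤ D := by omega
    calc r = (l - 1) * D + r % (l - 1) := hmod.symm
      _ ≤ (l - 1) * D + (l - 2) := by omega
      _ ≤ (l - 1) * D + D := by omega
      _ = l * D := hstep
      _ = D * l := Nat.mul_comm _ _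
  -- real versions
  have hRDL : (r : ℝ) ≤ (D : ℝ) * (l : ℝ) := by exact_mod_cast hrDl
  have hD2R : (2 : ℝ) ≤ (D : ℝ) := by exact_mod_cast hD2
  -- G0 bound via exp
  set SD := ∑ j ∈ Finset.range D, j with hSDdef
  have hSD2 : SD * 2 = D * (D - 1) := Finset.sum_range_id_mul_two D
  set E := (SD : ℝ) / (((l : ℝ) - 2) * (n : ℝ)) with hEdef
  have hE0 : (0 : ℝ) ≤ E := by positivity
  have hGexp : Gfun l n D 0 ≤ Real.exp (-E) := by
    rw [Gfun]
    calc ∏ j ∈ Finset.Ico 0 D, (1 - (j : ℝ) / (((l : ℝ) - 2) * n))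
        ≤ ∏ j ∈ Finset.Ico 0 D, Real.exp (-((j : ℝ) / (((l : ℝ) - 2) * n))) := by
          refine Finset.prod_le_prod
            (fun j hj => Gfun_factor_nonneg hl3 hn hDn (Finset.mem_Ico.mp hj).2)
            (fun j hj => ?_)
          have := Real.add_one_le_exp (-((j : ℝ) / (((l : ℝ) - 2) * n)))
          linarith
      _ = Real.exp (∑ j ∈ Finset.Ico 0 D, -((j : ℝ) / (((l : ℝ) - 2) * n))) :=
          (Real.exp_sum _ _).symm
      _ = Real.exp (-E) := by
          congr 1
          rw [Finset.sum_neg_distrib, ← Finset.sum_div, hEdef, hSDdef, ← Finset.range_eq_Ico]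
          push_cast
          ring
  have hSDR : (SD : ℝ) * 2 = (D : ℝ) * ((D : ℝ) - 1) := by
    have h1 : ((SD * 2 : ℕ) : ℝ) = ((D * (D - 1) : ℕ) : ℝ) := by exact_mod_cast hSD2
    have h2 : ((D - 1 : ℕ) : ℝ) = (D : ℝ) - 1 := by
      have : 1 ≤ D := by omega
      push_cast [this]
      ring
    push_cast at h1
    rw [h2] at h1
    exact_mod_cast h1
  set Q := (r : ℝ) ^ 2 / ((l : ℝ) ^ 3 * n) with hQdef
  have hQ0 : (0 : ℝ) ≤ Q := by positivity
  have hQ1 : Q ≤ 1 := by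
    rw [hQdef, div_le_one (by positivity)]
    have : ((r ^ 2 : ℕ) : ℝ) ≤ ((l ^ 3 * n : ℕ) : ℝ) := by exact_mod_cast hrn
    push_cast at this
    linarith
  have hEQ : Q / 4 ≤ E := by
    rw [hQdef, hEdef, div_div, div_le_div_iff₀ (by positivity) (by positivity)]
    have hkey : ((l : ℝ) - 2) * (r : ℝ) ^ 2 ≤ 2 * (l : ℝ) ^ 3 * ((D : ℝ) * ((D : ℝ) - 1)) := by
      have h1 : (r : ℝ) ^ 2 ≤ ((D : ℝ) * (l : ℝ)) ^ 2 := by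
        refine pow_le_pow_left₀ hRnn hRDL 2
      have h2 := mul_le_mul_of_nonneg_left h1 hL2.le
      have h3 : (0 : ℝ) ≤ (l : ℝ) ^ 3 * (D : ℝ) * ((D : ℝ) - 2) := by
        refine mul_nonneg (by positivity) (by linarith)
      have h4 : (0 : ℝ) ≤ 2 * (l : ℝ) ^ 2 * (D : ℝ) ^ 2 := by positivity
      calc ((l : ℝ) - 2) * (r : ℝ) ^ 2 ≤ ((l : ℝ) - 2) * ((D : ℝ) * (l : ℝ)) ^ 2 := h2
        _ = 2 * (l : ℝ) ^ 3 * ((D : ℝ) * ((D : ℝ) - 1))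
            - ((l : ℝ) ^ 3 * (D : ℝ) * ((D : ℝ) - 2) + 2 * (l : ℝ) ^ 2 * (D : ℝ) ^ 2) := by
            ring
        _ ≤ 2 * (l : ℝ) ^ 3 * ((D : ℝ) * ((D : ℝ) - 1)) := by linarith
    have h2 := mul_le_mul_of_nonneg_right hkey hNpos.le
    calc (r : ℝ) ^ 2 * (((l : ℝ) - 2) * n)
        = (((l : ℝ) - 2) * (r : ℝ) ^ 2) * n := by ring
      _ ≤ (2 * (l : ℝ) ^ 3 * ((D : ℝ) * ((D : ℝ) - 1))) * n := h2
      _ = ((D : ℝ) * ((D : ℝ) - 1)) * (2 * (l : ℝ) ^ 3 * n) := by ring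
      _ = ((SD : ℝ) * 2) * (2 * (l : ℝ) ^ 3 * n) := by rw [hSDR]
      _ = (SD : ℝ) * ((l : ℝ) ^ 3 * n * 4) := by ring
  clear_value D SD E Q
  have hLpos : (0 : ℝ) < (l : ℝ) := by linarith
  have hrR : ((r : ℕ) : ℝ) = ((r : ℕ) : ℝ) := rfl
  have hfinal : 1 + Gfun l n D 0 ≤ 2 * (((n : ℝ) - k) / n) ^ r :=
    final_numeric (G0 := Gfun l n D 0) (E := E) (N := (n : ℝ)) (K := (k : ℝ))
      (R := (r : ℝ)) (LL := (l : ℝ)) (Q := Q) r hGexp hEQ hE0 hQ0 hQ1 hQdef hrR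
      hNpos hK0 hKN hLpos hk hRnn
  have hcovn : covWeight n (n : ℝ) 𝓑 ≤ (((n : ℝ) - k) / n) ^ r := by linarith
  have hmul : ((n : ℝ) / ((n : ℝ) - k)) ^ r * (((n : ℝ) - k) / n) ^ r = 1 := by
    rw [← mul_pow, div_mul_div_comm, mul_comm ((n : ℝ)) ((n : ℝ) - k), div_self (by positivity),
      one_pow]
  calc covWeight n ((n : ℝ) - k) 𝓑
      ≤ ((n : ℝ) / ((n : ℝ) - k)) ^ r * covWeight n (n : ℝ) 𝓑 := hstage1
    _ ≤ ((n : ℝ) / ((n : ℝ) - k)) ^ r * (((n : ℝ) - k) / n) ^ r := by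
        refine mul_le_mul_of_nonneg_left hcovn (by positivity)
    _ = 1 := hmul
end

section
/- Let $\mathcal{A}$ be an $n$-uniform intersecting family such that no two members $A_1,A_2\in\mathcal{A}$ satisfy $k\le|A_1\cap A_2|\le n-k$, where $0<k\le n/4$. Define a relation $\sim$ on $\mathcal{A}$ by $A_1\sim A_2$ if $|A_1\cap A_2|\ge n/2$. Then $\sim$ is an equivalence relation on $\mathcal{A}$. -/
open Finset

variable {α : Type*}

theorem stmt17 [Fintype α] [DecidableEq α] (n : ℕ) (k : ℝ) (hk0 : 0 < k)
    (hk : k ≤ (n : ℝ) / 4) (𝓐 : Finset (Finset α)) (hunif : ∀ A ∈ 𝓐, A.card = n)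
    (hint : ∀ A1 ∈ 𝓐, ∀ A2 ∈ 𝓐, (A1 ∩ A2).Nonempty)
    (hgap : ∀ A1 ∈ 𝓐, ∀ A2 ∈ 𝓐,
      ¬(k ≤ ((A1 ∩ A2).card : ℝ) ∧ ((A1 ∩ A2).card : ℝ) ≤ (n : ℝ) - k)) :
    Equivalence (fun A B : {A // A ∈ 𝓐} => (n : ℝ) / 2 ≤ ((A.1 ∩ B.1).card : ℝ)) := by
  have key : ∀ A1 ∈ 𝓐, ∀ A2 ∈ 𝓐, (n : ℝ) / 2 ≤ ((A1 ∩ A2).card : ℝ) →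
      (n : ℝ) - k < ((A1 ∩ A2).card : ℝ) := by
    intro A1 h1 A2 h2 hle
    have := hgap A1 h1 A2 h2
    by_contra hcon
    push_neg at hcon
    exact this ⟨by linarith, hcon⟩
  constructor
  · intro A
    have : A.1 ∩ A.1 = A.1 := inter_self _
    rw [this, hunif A.1 A.2]
    have : (0:ℝ) ≤ n := Nat.cast_nonneg n
    linarith
  · intro A B h
    rwa [inter_comm]
  · intro A B C hab hbc
    have hab' := key A.1 A.2 B.1 B.2 hab
    have hbc' := key B.1 B.2 C.1 C.2 hbc
    -- |A∩B ∩ (B∩C)| ≥ |A∩B| + |B∩C| - n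
    have hsub : (A.1 ∩ B.1) ∪ (B.1 ∩ C.1) ⊆ B.1 := by
      intro x hx
      rcases Finset.mem_union.1 hx with h | h
      · exact (Finset.mem_inter.1 h).2
      · exact (Finset.mem_inter.1 h).1
    have hcu : ((A.1 ∩ B.1) ∪ (B.1 ∩ C.1)).card ≤ n := by
      rw [← hunif B.1 B.2]; exact Finset.card_le_card hsub
    have hsum : ((A.1 ∩ B.1) ∩ (B.1 ∩ C.1)).card + ((A.1 ∩ B.1) ∪ (B.1 ∩ C.1)).card
        = (A.1 ∩ B.1).card + (B.1 ∩ C.1).card := Finset.card_inter_add_card_union _ _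
    have hmono : ((A.1 ∩ B.1) ∩ (B.1 ∩ C.1)).card ≤ (A.1 ∩ C.1).card := by
      apply Finset.card_le_card
      intro x hx
      simp only [Finset.mem_inter] at hx ⊢
      exact ⟨hx.1.1, hx.2.2⟩
    have h1 : ((A.1 ∩ B.1).card : ℝ) + ((B.1 ∩ C.1).card : ℝ) - (n : ℝ)
        ≤ (((A.1 ∩ B.1) ∩ (B.1 ∩ C.1)).card : ℝ) := by
      have := hsum
      have h2 : (((A.1 ∩ B.1) ∩ (B.1 ∩ C.1)).card : ℝ) + (((A.1 ∩ B.1) ∪ (B.1 ∩ C.1)).card : ℝ)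
          = ((A.1 ∩ B.1).card : ℝ) + ((B.1 ∩ C.1).card : ℝ) := by exact_mod_cast this
      have h3 : (((A.1 ∩ B.1) ∪ (B.1 ∩ C.1)).card : ℝ) ≤ (n : ℝ) := by exact_mod_cast hcu
      linarith
    have hmono' : (((A.1 ∩ B.1) ∩ (B.1 ∩ C.1)).card : ℝ) ≤ ((A.1 ∩ C.1).card : ℝ) := by
      exact_mod_cast hmono
    show (n:ℝ)/2 ≤ ((A.1 ∩ C.1).card : ℝ)
    linarith
end
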